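/- arXiv:1304.3587 — 7 statements merged into one kernel-verified Lean document; each statement's English description precedes it below -/
import Mathlib

section
/- Let (Y,ν) be a probability space, S : Y → Y an invertible measure-preserving ergodic transformation, and φ : Y → {0,1} measurable; for m ≥ 0 set φ^(m)(y) = φ(y) + φ(Sy) + … + φ(S^{m-1}y). Assume: (a) S has discrete spectrum, i.e. the closed linear span in L²(ν) of the unimodular eigenfunctions {η ∈ L²(ν) : |η| = 1 a.e. and η∘S = α·η a.e. for some α ∈ ℂ} equals L²(ν); (b) (q_n) is a strictly increasing sequence of natural numbers such that f∘S^{q_n} → f in L²(ν) for every f ∈ L²(ν); (c) ∫_Y (−1)^{φ^(q_n)} dν → c for some real c with |c| ≤ 1. Then for all ξ, η ∈ L²(ν), ∫_Y (−1)^{φ^(q_n)(y)} ξ(S^{q_n}y) \overline{η(y)} dν(y) → c·∫_Y ξ \overline{η} dν as n → ∞. -/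
open MeasureTheory Filter Function
open scoped ENNReal

private lemma tendsto_of_approx_aux {A : ℕ → ℂ} {L : ℂ}
    (h : ∀ ε : ℝ, 0 < ε → ∃ (A' : ℕ → ℂ) (L' : ℂ),
      Tendsto A' atTop (nhds L') ∧ (∀ n, ‖A n - A' n‖ ≤ ε) ∧ ‖L - L'‖ ≤ ε) :
    Tendsto A atTop (nhds L) := by
  rw [Metric.tendsto_atTop]
  intro ε hε
  obtain ⟨A', L', hT, hA, hL⟩ := h (ε / 4) (by linarith)
  rw [Metric.tendsto_atTop] at hT
  obtain ⟨N, hN⟩ := hT (ε / 4) (by linarith)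
  refine ⟨N, fun n hn => ?_⟩
  have h1 := hN n hn
  have h2 : dist (A n) L ≤ dist (A n) (A' n) + dist (A' n) L' + dist L' L :=
    dist_triangle4 _ _ _ _
  have h3 : dist (A n) (A' n) ≤ ε / 4 := by rw [dist_eq_norm]; exact hA n
  have h4 : dist L' L ≤ ε / 4 := by rw [dist_comm, dist_eq_norm]; exact hL
  linarith

/-- Let `(Y,ν)` be a probability space, `S` an invertible measure-preserving
ergodic transformation with discrete spectrum (the closed span of the unimodular
eigenfunctions is all of `L²(ν)`), and `φ : Y → {0,1}` measurable, with Birkhoff sums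
`φ^{(m)}(y) = Σ_{i<m} φ(S^i y)`. If `(q_n)` is a strictly increasing sequence of naturals
with `f ∘ S^{q_n} → f` in `L²(ν)` for every `f ∈ L²(ν)`, and
`∫ (−1)^{φ^{(q_n)}} dν → c` with `|c| ≤ 1`, then for all `ξ, η ∈ L²(ν)`,
`∫ (−1)^{φ^{(q_n)}(y)} ξ(S^{q_n} y) conj(η(y)) dν(y) → c·∫ ξ conj(η) dν`. -/
theorem weighted_operator_weak_limit
    {Y : Type*} [MeasurableSpace Y] (ν : Measure Y) [IsProbabilityMeasure ν]
    (S : Y ≃ᵐ Y) (hS : Ergodic S ν)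
    (φ : Y → ℕ) (hφm : Measurable φ) (hφ01 : ∀ y, φ y ≤ 1)
    (hspan : (Submodule.span ℂ {η : Lp ℂ 2 ν |
        (∀ᵐ y ∂ν, ‖η y‖ = 1) ∧
        ∃ α : ℂ, (fun y => η (S y)) =ᵐ[ν] fun y => α * η y}).topologicalClosure = ⊤)
    (q : ℕ → ℕ) (hq : StrictMono q)
    (hqrig : ∀ f : Lp ℂ 2 ν,
      Tendsto (fun n : ℕ => eLpNorm (fun y => f ((⇑S)^[q n] y) - f y) 2 ν)
        atTop (nhds 0))
    (c : ℝ) (hc : |c| ≤ 1)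
    (hcc : Tendsto
      (fun n : ℕ => ∫ y, (-1 : ℝ) ^ (∑ i ∈ Finset.range (q n), φ ((⇑S)^[i] y)) ∂ν)
      atTop (nhds c)) :
    ∀ ξ η : Lp ℂ 2 ν,
      Tendsto
        (fun n : ℕ => ∫ y, (-1 : ℂ) ^ (∑ i ∈ Finset.range (q n), φ ((⇑S)^[i] y)) *
            ξ ((⇑S)^[q n] y) * (starRingEnd ℂ) (η y) ∂ν)
        atTop
        (nhds ((c : ℂ) * ∫ y, ξ y * (starRingEnd ℂ) (η y) ∂ν)) := by
  classical
  have hSmp : MeasurePreserving S ν ν := hS.toMeasurePreserving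
  have hSi : ∀ m : ℕ, MeasurePreserving ((⇑S)^[m]) ν ν := fun m => hSmp.iterate m
  set W : ℕ → Y → ℂ := fun m y => (-1 : ℂ) ^ (∑ i ∈ Finset.range m, φ ((⇑S)^[i] y))
    with hWdef
  set u : Y → ℂ := fun y => (-1 : ℂ) ^ (φ y) with hudef
  set D : Set (Lp ℂ 2 ν) := {η : Lp ℂ 2 ν |
      (∀ᵐ y ∂ν, ‖η y‖ = 1) ∧
      ∃ α : ℂ, (fun y => η (S y)) =ᵐ[ν] fun y => α * η y} with hDdef
  -- measurability and basic facts
  have hWm : ∀ m, Measurable (W m) := by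
    intro m
    exact measurable_from_top.comp
      (Finset.measurable_sum _ (fun i _ => hφm.comp (S.measurable.iterate i)))
  have hum : Measurable u := measurable_from_top.comp hφm
  have hWnorm : ∀ m y, ‖W m y‖ = 1 := by
    intro m y; simp [hWdef]
  have hunorm : ∀ y, ‖u y‖ = 1 := by
    intro y; simp [hudef]
  have huu : ∀ y, u y * u y = 1 := by
    intro y; simp only [hudef]; rw [← mul_pow]; norm_num
  -- cocycle identity
  have hsum : ∀ (m : ℕ) (y : Y),
      (∑ i ∈ Finset.range m, φ ((⇑S)^[i] (S y))) + φ y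
        = (∑ i ∈ Finset.range m, φ ((⇑S)^[i] y)) + φ ((⇑S)^[m] y) := by
    intro m y
    have h1 : ∀ i : ℕ, (⇑S)^[i] (S y) = (⇑S)^[i + 1] y := fun i =>
      (Function.iterate_succ_apply (⇑S) i y).symm
    calc (∑ i ∈ Finset.range m, φ ((⇑S)^[i] (S y))) + φ y
        = (∑ i ∈ Finset.range m, φ ((⇑S)^[i + 1] y)) + φ ((⇑S)^[0] y) := by
          simp only [h1, Function.iterate_zero_apply]
      _ = ∑ i ∈ Finset.range (m + 1), φ ((⇑S)^[i] y) := (Finset.sum_range_succ' (fun i => φ ((⇑S)^[i] y)) m).symm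
      _ = _ := Finset.sum_range_succ _ m
  have hWco : ∀ (m : ℕ) (y : Y), W m (S y) = W m y * u ((⇑S)^[m] y) * u y := by
    intro m y
    have h2 : W m (S y) * u y = W m y * u ((⇑S)^[m] y) := by
      simp only [hWdef, hudef]
      rw [← pow_add, ← pow_add, hsum m y]
    have h3 : u y * u y = 1 := huu y
    linear_combination u y * h2 - W m (S y) * h3
  -- integrability helpers
  have memB : ∀ (f : Y → ℂ), AEStronglyMeasurable f ν → (∀ᵐ y ∂ν, ‖f y‖ ≤ 1) →
      MemLp f 2 ν := fun f hm hb => MemLp.of_bound hm 1 hb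
  have intB : ∀ (f : Y → ℂ), AEStronglyMeasurable f ν → (∀ᵐ y ∂ν, ‖f y‖ ≤ 1) →
      Integrable f ν := fun f hm hb => (memB f hm hb).integrable one_le_two
  have hhalf : (1 : ℝ≥0∞) / 1 = 1 / 2 + 1 / 2 := by
    rw [ENNReal.div_add_div_same, one_add_one_eq_two,
      ENNReal.div_self two_ne_zero ENNReal.ofNat_ne_top]
    simp
  have mulInt : ∀ (f g : Y → ℂ), MemLp f 2 ν → MemLp g 2 ν →
      Integrable (fun y => f y * g y) ν := by
    intro f g hf hg
    have h := MemLp.smul (p := 2) (q := 2) (r := 1) hg hf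
    rw [memLp_one_iff_integrable] at h
    exact h
  have memConj : ∀ (g : Y → ℂ), MemLp g 2 ν →
      MemLp (fun y => (starRingEnd ℂ) (g y)) 2 ν := by
    intro g hg
    refine ⟨RCLike.continuous_conj.comp_aestronglyMeasurable hg.1, ?_⟩
    have : eLpNorm (fun y => (starRingEnd ℂ) (g y)) 2 ν = eLpNorm g 2 ν :=
      eLpNorm_congr_norm_ae (Eventually.of_forall fun y => RCLike.norm_conj _)
    rw [this]; exact hg.2
  -- the basic Cauchy–Schwarz estimate
  have est : ∀ (v f g : Y → ℂ), AEStronglyMeasurable v ν → (∀ᵐ y ∂ν, ‖v y‖ ≤ 1) →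
      MemLp f 2 ν → MemLp g 2 ν →
      ‖∫ y, v y * (f y * (starRingEnd ℂ) (g y)) ∂ν‖ ≤
        (eLpNorm f 2 ν).toReal * (eLpNorm g 2 ν).toReal := by
    intro v f g hv hv1 hf hg
    have hconj : Real.HolderConjugate 2 2 := Real.HolderConjugate.two_two
    have hf2 : MemLp f (ENNReal.ofReal 2) ν := by
      simpa [ENNReal.ofReal_ofNat] using hf
    have hg2 : MemLp g (ENNReal.ofReal 2) ν := by
      simpa [ENNReal.ofReal_ofNat] using hg
    have hmulR : Integrable (fun y => ‖f y‖ * ‖g y‖) ν := by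
      have h := MemLp.smul (p := 2) (q := 2) (r := 1) hg.norm hf.norm
      rw [memLp_one_iff_integrable] at h
      exact h
    have h1 : ‖∫ y, v y * (f y * (starRingEnd ℂ) (g y)) ∂ν‖ ≤
        ∫ y, ‖v y * (f y * (starRingEnd ℂ) (g y))‖ ∂ν :=
      norm_integral_le_integral_norm _
    have h2 : ∫ y, ‖v y * (f y * (starRingEnd ℂ) (g y))‖ ∂ν ≤ ∫ y, ‖f y‖ * ‖g y‖ ∂ν := by
      refine integral_mono_of_nonneg (Eventually.of_forall fun y => norm_nonneg _) hmulR ?_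
      filter_upwards [hv1] with y hy
      have : ‖v y * (f y * (starRingEnd ℂ) (g y))‖ = ‖v y‖ * (‖f y‖ * ‖g y‖) := by
        simp [norm_mul]
      rw [this]
      calc ‖v y‖ * (‖f y‖ * ‖g y‖) ≤ 1 * (‖f y‖ * ‖g y‖) := by
            apply mul_le_mul_of_nonneg_right hy (by positivity)
        _ = ‖f y‖ * ‖g y‖ := one_mul _
    have h3 := integral_mul_norm_le_Lp_mul_Lq hconj hf2 hg2
    have h4 : ∀ (h : Y → ℂ), MemLp h 2 ν →
        (eLpNorm h 2 ν).toReal = (∫ y, ‖h y‖ ^ (2 : ℝ) ∂ν) ^ ((1 : ℝ) / 2) := by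
      intro h hh
      rw [hh.eLpNorm_eq_integral_rpow_norm two_ne_zero ENNReal.ofNat_ne_top]
      rw [ENNReal.toReal_ofReal (Real.rpow_nonneg
        (integral_nonneg fun y => Real.rpow_nonneg (norm_nonneg _) _) _)]
      norm_num
    rw [h4 f hf, h4 g hg]
    exact h1.trans (h2.trans h3)
  have honeconst : eLpNorm (fun _ : Y => (1 : ℂ)) 2 ν = 1 := by
    rw [eLpNorm_const (1 : ℂ) two_ne_zero (IsProbabilityMeasure.ne_zero ν)]
    simp
  have est1 : ∀ (v h : Y → ℂ), AEStronglyMeasurable v ν → (∀ᵐ y ∂ν, ‖v y‖ ≤ 1) →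
      MemLp h 2 ν → ‖∫ y, v y * h y ∂ν‖ ≤ (eLpNorm h 2 ν).toReal := by
    intro v h hv hv1 hh
    have h0 := est v h (fun _ => 1) hv hv1 hh (memLp_const 1)
    rw [honeconst] at h0
    simpa using h0
  -- norms of Lp elements
  have h2R : ∀ f : Lp ℂ 2 ν, (eLpNorm (⇑f) 2 ν).toReal = ‖f‖ := fun f =>
    (Lp.norm_def f).symm
  have hsubR : ∀ f f' : Lp ℂ 2 ν,
      (eLpNorm (fun y => f y - f' y) 2 ν).toReal = ‖f - f'‖ := by
    intro f f'
    rw [Lp.norm_def]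
    congr 1
    exact eLpNorm_congr_ae (Lp.coeFn_sub f f').symm
  -- rigidity in real form
  have hqrigR : ∀ f : Lp ℂ 2 ν,
      Tendsto (fun n : ℕ => (eLpNorm (fun y => f ((⇑S)^[q n] y) - f y) 2 ν).toReal)
        atTop (nhds 0) := by
    intro f
    have h1 := (ENNReal.tendsto_toReal ENNReal.zero_ne_top).comp (hqrig f)
    simpa [Function.comp_def] using h1
  have umem : MemLp u 2 ν :=
    memB u hum.aestronglyMeasurable (Eventually.of_forall fun y => (hunorm y).le)
  have huB : Tendsto (fun n : ℕ =>
      (eLpNorm (fun y => u ((⇑S)^[q n] y) - u y) 2 ν).toReal) atTop (nhds 0) := by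
    have h1 := hqrigR (umem.toLp u)
    refine h1.congr fun n => ?_
    congr 1
    apply eLpNorm_congr_ae
    have hc1 : ⇑(umem.toLp u) =ᵐ[ν] u := umem.coeFn_toLp
    have hc2 : (⇑(umem.toLp u)) ∘ ((⇑S)^[q n]) =ᵐ[ν] u ∘ ((⇑S)^[q n]) :=
      (hSi (q n)).quasiMeasurePreserving.ae_eq_comp hc1
    filter_upwards [hc1, hc2] with y h1 h2
    simp only [Function.comp_apply] at h2
    rw [h1, h2]
  -- KEY LEMMA: convergence along unimodular eigenfunctions
  have key : ∀ (ψ : Y → ℂ), AEStronglyMeasurable ψ ν → (∀ᵐ y ∂ν, ‖ψ y‖ = 1) →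
      ∀ γ : ℂ, ((fun y => ψ (S y)) =ᵐ[ν] fun y => γ * ψ y) →
      Tendsto (fun n : ℕ => ∫ y, W (q n) y * ψ y ∂ν) atTop
        (nhds ((c : ℂ) * ∫ y, ψ y ∂ν)) := by
    intro ψ hψm hψ1 γ hγ
    have hψb : ∀ᵐ y ∂ν, ‖ψ y‖ ≤ 1 := hψ1.mono fun y h => h.le
    have hψmem : MemLp ψ 2 ν := memB ψ hψm hψb
    by_cases hγ1 : γ = 1
    · -- eigenvalue 1 : ψ is a.e. constant by ergodicity
      obtain ⟨k, hk⟩ := hS.ae_eq_const_of_ae_eq_comp_ae hψm (by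
        filter_upwards [hγ] with y hy
        simpa [hγ1] using hy)
      have h2 : ∫ y, ψ y ∂ν = k := by
        rw [integral_congr_ae hk]
        simp
      have h1 : ∀ n : ℕ, ∫ y, W (q n) y * ψ y ∂ν
          = ((∫ y, (-1 : ℝ) ^ (∑ i ∈ Finset.range (q n), φ ((⇑S)^[i] y)) ∂ν : ℝ) : ℂ) * k := by
        intro n
        have e0 : ((∫ y, (-1 : ℝ) ^ (∑ i ∈ Finset.range (q n), φ ((⇑S)^[i] y)) ∂ν : ℝ) : ℂ)
            = ∫ y, (((-1 : ℝ) ^ (∑ i ∈ Finset.range (q n), φ ((⇑S)^[i] y)) : ℝ) : ℂ) ∂ν :=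
          integral_ofReal.symm
        rw [e0, ← integral_mul_const]
        apply integral_congr_ae
        filter_upwards [hk] with y hy
        simp only [hWdef]
        rw [hy]
        simp only [Function.const_apply]
        push_cast
        ring
      have h3 : Tendsto (fun n : ℕ =>
          ((∫ y, (-1 : ℝ) ^ (∑ i ∈ Finset.range (q n), φ ((⇑S)^[i] y)) ∂ν : ℝ) : ℂ))
          atTop (nhds ((c : ℝ) : ℂ)) := (Complex.continuous_ofReal.tendsto c).comp hcc
      have h4 := (h3.mul_const k).congr fun n => (h1 n).symm
      rw [h2]
      exact h4
    · -- eigenvalue ≠ 1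
      have hψint : Integrable ψ ν := intB ψ hψm hψb
      have hJ : ∫ y, ψ (S y) ∂ν = ∫ y, ψ y ∂ν := hSmp.integral_comp' ψ
      have hJ2 : ∫ y, ψ (S y) ∂ν = γ * ∫ y, ψ y ∂ν := by
        rw [integral_congr_ae hγ, integral_const_mul]
      have h3 : (1 - γ) * ∫ y, ψ y ∂ν = 0 := by linear_combination hJ2 - hJ
      have hint0 : ∫ y, ψ y ∂ν = 0 := by
        rcases mul_eq_zero.mp h3 with h | h
        · exact absurd (sub_eq_zero.mp h).symm hγ1
        · exact h
      rw [hint0, mul_zero]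
      have hint2 : ∀ n : ℕ, Integrable (fun y => W (q n) y * ψ y) ν := by
        intro n
        refine intB _ (((hWm (q n)).aestronglyMeasurable).mul hψm) ?_
        filter_upwards [hψb] with y hy
        rw [norm_mul, hWnorm]
        simpa using hy
      have hint1 : ∀ n : ℕ,
          Integrable (fun y => W (q n) y * u y * u ((⇑S)^[q n] y) * ψ y) ν := by
        intro n
        refine intB _ ?_ ?_
        · exact ((((hWm (q n)).mul hum).mul
            (hum.comp (S.measurable.iterate (q n)))).aestronglyMeasurable).mul hψm
        · filter_upwards [hψb] with y hy
          rw [norm_mul, norm_mul, norm_mul, hWnorm, hunorm, hunorm]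
          simpa using hy
      have hab : ∀ n : ℕ, (∫ y, W (q n) y * ψ y ∂ν)
          = γ * ∫ y, W (q n) y * u y * u ((⇑S)^[q n] y) * ψ y ∂ν := by
        intro n
        rw [← (hSmp.integral_comp' (fun y => W (q n) y * ψ y))]
        rw [← integral_const_mul]
        apply integral_congr_ae
        filter_upwards [hγ] with y hy
        rw [hWco (q n) y, hy]
        ring
      have hmemdiff : ∀ n : ℕ, MemLp (fun y => u ((⇑S)^[q n] y) - u y) 2 ν := by
        intro n
        exact (memB _ ((hum.comp (S.measurable.iterate (q n))).aestronglyMeasurable)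
          (Eventually.of_forall fun y => (hunorm _).le)).sub umem
      have hdiff : ∀ n : ℕ,
          (∫ y, W (q n) y * u y * u ((⇑S)^[q n] y) * ψ y ∂ν)
            - (∫ y, W (q n) y * ψ y ∂ν)
          = ∫ y, (W (q n) y * u y * ψ y) * (u ((⇑S)^[q n] y) - u y) ∂ν := by
        intro n
        rw [← integral_sub (hint1 n) (hint2 n)]
        refine integral_congr_ae (Eventually.of_forall fun y => ?_)
        linear_combination (W (q n) y * ψ y) * huu y
      have hbnd : ∀ n : ℕ,
          ‖(∫ y, W (q n) y * u y * u ((⇑S)^[q n] y) * ψ y ∂ν)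
            - (∫ y, W (q n) y * ψ y ∂ν)‖
          ≤ (eLpNorm (fun y => u ((⇑S)^[q n] y) - u y) 2 ν).toReal := by
        intro n
        rw [hdiff n]
        refine est1 _ _ ?_ ?_ (hmemdiff n)
        · exact (((hWm (q n)).mul hum).aestronglyMeasurable).mul hψm
        · filter_upwards [hψb] with y hy
          rw [norm_mul, norm_mul, hWnorm, hunorm]
          simpa using hy
      have hba : Tendsto (fun n : ℕ =>
          (∫ y, W (q n) y * u y * u ((⇑S)^[q n] y) * ψ y ∂ν)
            - (∫ y, W (q n) y * ψ y ∂ν)) atTop (nhds 0) :=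
        squeeze_zero_norm hbnd huB
      have h6 : ∀ n : ℕ, (∫ y, W (q n) y * ψ y ∂ν)
          = γ * ((∫ y, W (q n) y * u y * u ((⇑S)^[q n] y) * ψ y ∂ν)
              - (∫ y, W (q n) y * ψ y ∂ν)) / (1 - γ) := by
        intro n
        have h7 : (1 : ℂ) - γ ≠ 0 := sub_ne_zero.mpr (Ne.symm hγ1)
        rw [eq_div_iff h7]
        linear_combination hab n
      have h8 : Tendsto (fun n : ℕ =>
          γ * ((∫ y, W (q n) y * u y * u ((⇑S)^[q n] y) * ψ y ∂ν)
              - (∫ y, W (q n) y * ψ y ∂ν)) / (1 - γ)) atTop (nhds 0) := by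
        simpa using (hba.const_mul γ).div_const (1 - γ)
      exact h8.congr fun n => (h6 n).symm
  -- the property J of L¹ "products" and its linearity
  have hWint : ∀ (m : ℕ) (h : Y → ℂ), Integrable h ν →
      Integrable (fun y => W m y * h y) ν := by
    intro m h hh
    exact hh.bdd_mul ((hWm m).aestronglyMeasurable)
      (Eventually.of_forall fun y => (hWnorm m y).le)
  set J : (Y → ℂ) → Prop := fun h => Integrable h ν ∧
      Tendsto (fun n : ℕ => ∫ y, W (q n) y * h y ∂ν) atTop
        (nhds ((c : ℂ) * ∫ y, h y ∂ν)) with hJdef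
  have Jcongr : ∀ (h₁ h₂ : Y → ℂ), h₁ =ᵐ[ν] h₂ → J h₁ → J h₂ := by
    rintro h₁ h₂ hae ⟨hi, ht⟩
    refine ⟨hi.congr hae, ?_⟩
    have e1 : ∀ n : ℕ, ∫ y, W (q n) y * h₁ y ∂ν = ∫ y, W (q n) y * h₂ y ∂ν := by
      intro n
      apply integral_congr_ae
      filter_upwards [hae] with y hy
      rw [hy]
    have e2 : ∫ y, h₁ y ∂ν = ∫ y, h₂ y ∂ν := integral_congr_ae hae
    rw [← e2]
    exact ht.congr fun n => e1 n
  have Jadd : ∀ (h₁ h₂ : Y → ℂ), J h₁ → J h₂ → J (fun y => h₁ y + h₂ y) := by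
    rintro h₁ h₂ ⟨hi₁, ht₁⟩ ⟨hi₂, ht₂⟩
    refine ⟨hi₁.add hi₂, ?_⟩
    have e1 : ∀ n : ℕ, ∫ y, W (q n) y * (h₁ y + h₂ y) ∂ν
        = (∫ y, W (q n) y * h₁ y ∂ν) + ∫ y, W (q n) y * h₂ y ∂ν := by
      intro n
      rw [← integral_add (hWint (q n) h₁ hi₁) (hWint (q n) h₂ hi₂)]
      refine integral_congr_ae (Eventually.of_forall fun y => ?_)
      ring
    have e2 : ∫ y, (h₁ y + h₂ y) ∂ν = (∫ y, h₁ y ∂ν) + ∫ y, h₂ y ∂ν :=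
      integral_add hi₁ hi₂
    have h5 := (ht₁.add ht₂).congr fun n => (e1 n).symm
    rw [show ((c : ℂ) * ∫ y, (h₁ y + h₂ y) ∂ν)
        = (c : ℂ) * (∫ y, h₁ y ∂ν) + (c : ℂ) * ∫ y, h₂ y ∂ν by rw [e2]; ring]
    exact h5
  have Jsmul : ∀ (a : ℂ) (h : Y → ℂ), J h → J (fun y => a * h y) := by
    rintro a h ⟨hi, ht⟩
    refine ⟨hi.const_mul a, ?_⟩
    have e1 : ∀ n : ℕ, ∫ y, W (q n) y * (a * h y) ∂ν
        = a * ∫ y, W (q n) y * h y ∂ν := by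
      intro n
      rw [← integral_const_mul]
      refine integral_congr_ae (Eventually.of_forall fun y => ?_)
      ring
    have e2 : ∫ y, (a * h y) ∂ν = a * ∫ y, h y ∂ν := integral_const_mul a _
    have h5 := (ht.const_mul a).congr fun n => (e1 n).symm
    rw [show ((c : ℂ) * ∫ y, (a * h y) ∂ν) = a * ((c : ℂ) * ∫ y, h y ∂ν) by
      rw [e2]; ring]
    exact h5
  -- base case: products of two eigenfunctions
  have hbase : ∀ f ∈ D, ∀ g ∈ D, J (fun y => f y * (starRingEnd ℂ) (g y)) := by
    rintro f ⟨hf1, α, hfe⟩ g ⟨hg1, β, hge⟩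
    have hmeas : AEStronglyMeasurable (fun y => f y * (starRingEnd ℂ) (g y)) ν :=
      (Lp.aestronglyMeasurable f).mul
        (RCLike.continuous_conj.comp_aestronglyMeasurable (Lp.aestronglyMeasurable g))
    have hnorm1 : ∀ᵐ y ∂ν, ‖f y * (starRingEnd ℂ) (g y)‖ = 1 := by
      filter_upwards [hf1, hg1] with y h1 h2
      rw [norm_mul, RCLike.norm_conj, h1, h2, one_mul]
    have heig : (fun y => f (S y) * (starRingEnd ℂ) (g (S y))) =ᵐ[ν]
        fun y => (α * (starRingEnd ℂ) β) * (f y * (starRingEnd ℂ) (g y)) := by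
      filter_upwards [hfe, hge] with y h1 h2
      rw [h1, h2, map_mul]
      ring
    refine ⟨intB _ hmeas (hnorm1.mono fun y h => h.le), ?_⟩
    exact key _ hmeas hnorm1 (α * (starRingEnd ℂ) β) heig
  -- extend to the span by (bi-)linearity
  have hspanJ : ∀ f ∈ Submodule.span ℂ D, ∀ g ∈ Submodule.span ℂ D,
      J (fun y => f y * (starRingEnd ℂ) (g y)) := by
    have step1 : ∀ g ∈ D, ∀ f ∈ Submodule.span ℂ D,
        J (fun y => f y * (starRingEnd ℂ) (g y)) := by
      intro g hg f hf
      induction hf using Submodule.span_induction with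
      | mem x hx => exact hbase x hx g hg
      | zero =>
        refine Jcongr (fun _ => 0) _ ?_ ?_
        · filter_upwards [Lp.coeFn_zero ℂ 2 ν] with y hy
          rw [hy]
          simp
        · refine ⟨integrable_const 0, ?_⟩
          simpa using (tendsto_const_nhds :
            Tendsto (fun _ : ℕ => (0 : ℂ)) atTop (nhds 0))
      | add x z hx hz ihx ihz =>
        refine Jcongr _ _ ?_ (Jadd _ _ ihx ihz)
        filter_upwards [Lp.coeFn_add x z] with y hy
        rw [hy]
        simp only [Pi.add_apply]
        ring
      | smul a x hx ih =>
        refine Jcongr _ _ ?_ (Jsmul a _ ih)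
        filter_upwards [Lp.coeFn_smul a x] with y hy
        rw [hy]
        simp only [Pi.smul_apply, smul_eq_mul]
        ring
    intro f hf g hg
    induction hg using Submodule.span_induction with
    | mem x hx => exact step1 x hx f hf
    | zero =>
      refine Jcongr (fun _ => 0) _ ?_ ?_
      · filter_upwards [Lp.coeFn_zero ℂ 2 ν] with y hy
        rw [hy]
        simp
      · refine ⟨integrable_const 0, ?_⟩
        simpa using (tendsto_const_nhds :
          Tendsto (fun _ : ℕ => (0 : ℂ)) atTop (nhds 0))
    | add x z hx hz ihx ihz =>
      refine Jcongr _ _ ?_ (Jadd _ _ ihx ihz)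
      filter_upwards [Lp.coeFn_add x z] with y hy
      rw [hy]
      simp only [Pi.add_apply, map_add]
      ring
    | smul a x hx ih =>
      refine Jcongr _ _ ?_ (Jsmul ((starRingEnd ℂ) a) _ ih)
      filter_upwards [Lp.coeFn_smul a x] with y hy
      rw [hy]
      simp only [Pi.smul_apply, smul_eq_mul, map_mul]
      ring
  -- density of the span
  have hdense : ∀ (f : Lp ℂ 2 ν) (δ : ℝ), 0 < δ →
      ∃ f' ∈ Submodule.span ℂ D, ‖f - f'‖ < δ := by
    intro f δ hδ
    have h1 : f ∈ closure ((Submodule.span ℂ D : Submodule ℂ (Lp ℂ 2 ν)) : Set (Lp ℂ 2 ν)) := by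
      rw [← Submodule.topologicalClosure_coe, hspan]
      trivial
    obtain ⟨f', hf'mem, hf'd⟩ := Metric.mem_closure_iff.mp h1 δ hδ
    exact ⟨f', hf'mem, by rwa [dist_eq_norm] at hf'd⟩
  -- the approximation gap estimate
  have hgap : ∀ (f g f' g' : Lp ℂ 2 ν) (v : Y → ℂ), AEStronglyMeasurable v ν →
      (∀ᵐ y ∂ν, ‖v y‖ ≤ 1) →
      ‖(∫ y, v y * (f y * (starRingEnd ℂ) (g y)) ∂ν)
          - ∫ y, v y * (f' y * (starRingEnd ℂ) (g' y)) ∂ν‖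
        ≤ ‖f - f'‖ * ‖g‖ + ‖f'‖ * ‖g - g'‖ := by
    intro f g f' g' v hv hv1
    have i1 : Integrable (fun y => v y * (f y * (starRingEnd ℂ) (g y))) ν :=
      (mulInt _ _ (Lp.memLp f) (memConj _ (Lp.memLp g))).bdd_mul hv hv1
    have i2 : Integrable (fun y => v y * (f' y * (starRingEnd ℂ) (g' y))) ν :=
      (mulInt _ _ (Lp.memLp f') (memConj _ (Lp.memLp g'))).bdd_mul hv hv1
    have i3 : Integrable (fun y => v y * ((f y - f' y) * (starRingEnd ℂ) (g y))) ν :=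
      (mulInt _ _ ((Lp.memLp f).sub (Lp.memLp f')) (memConj _ (Lp.memLp g))).bdd_mul hv hv1
    have i4 : Integrable (fun y => v y * (f' y * (starRingEnd ℂ) (g y - g' y))) ν :=
      (mulInt _ _ (Lp.memLp f') (memConj _ ((Lp.memLp g).sub (Lp.memLp g')))).bdd_mul hv hv1
    have e : (∫ y, v y * (f y * (starRingEnd ℂ) (g y)) ∂ν)
          - ∫ y, v y * (f' y * (starRingEnd ℂ) (g' y)) ∂ν
        = (∫ y, v y * ((f y - f' y) * (starRingEnd ℂ) (g y)) ∂ν)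
          + ∫ y, v y * (f' y * (starRingEnd ℂ) (g y - g' y)) ∂ν := by
      rw [← integral_sub i1 i2, ← integral_add i3 i4]
      refine integral_congr_ae (Eventually.of_forall fun y => ?_)
      simp only [map_sub]
      ring
    rw [e]
    refine (norm_add_le _ _).trans ?_
    have b1 := est v (fun y => f y - f' y) (⇑g) hv hv1
      ((Lp.memLp f).sub (Lp.memLp f')) (Lp.memLp g)
    have b2 := est v (⇑f') (fun y => g y - g' y) hv hv1
      (Lp.memLp f') ((Lp.memLp g).sub (Lp.memLp g'))
    calc ‖∫ y, v y * ((f y - f' y) * (starRingEnd ℂ) (g y)) ∂ν‖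
          + ‖∫ y, v y * (f' y * (starRingEnd ℂ) (g y - g' y)) ∂ν‖
        ≤ (eLpNorm (fun y => f y - f' y) 2 ν).toReal * (eLpNorm (⇑g) 2 ν).toReal
          + (eLpNorm (⇑f') 2 ν).toReal * (eLpNorm (fun y => g y - g' y) 2 ν).toReal :=
          add_le_add b1 b2
      _ = ‖f - f'‖ * ‖g‖ + ‖f'‖ * ‖g - g'‖ := by
          rw [hsubR, h2R, h2R, hsubR]
  -- weak convergence for all pairs in L²
  have hPall : ∀ f g : Lp ℂ 2 ν,
      Tendsto (fun n : ℕ => ∫ y, W (q n) y * (f y * (starRingEnd ℂ) (g y)) ∂ν) atTop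
        (nhds ((c : ℂ) * ∫ y, f y * (starRingEnd ℂ) (g y) ∂ν)) := by
    intro f g
    apply tendsto_of_approx_aux
    intro ε hε
    have hMpos : (0 : ℝ) < ‖f‖ + ‖g‖ + 2 := by positivity
    have hδpos : (0 : ℝ) < min 1 (ε / (‖f‖ + ‖g‖ + 2)) := by
      apply lt_min one_pos
      positivity
    set δ : ℝ := min 1 (ε / (‖f‖ + ‖g‖ + 2)) with hδdef
    have hδ1 : δ ≤ 1 := min_le_left _ _
    have hδ2 : δ * (‖f‖ + ‖g‖ + 2) ≤ ε := by
      have := min_le_right 1 (ε / (‖f‖ + ‖g‖ + 2))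
      calc δ * (‖f‖ + ‖g‖ + 2) ≤ (ε / (‖f‖ + ‖g‖ + 2)) * (‖f‖ + ‖g‖ + 2) := by
            apply mul_le_mul_of_nonneg_right this hMpos.le
        _ = ε := div_mul_cancel₀ ε hMpos.ne'
    obtain ⟨f', hf'mem, hf'⟩ := hdense f δ hδpos
    obtain ⟨g', hg'mem, hg'⟩ := hdense g δ hδpos
    obtain ⟨hI', hT⟩ := hspanJ f' hf'mem g' hg'mem
    have hf'n : ‖f'‖ ≤ ‖f‖ + 1 := by
      have h1 : ‖f'‖ - ‖f‖ ≤ ‖f' - f‖ := norm_sub_norm_le f' f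
      have h2 : ‖f' - f‖ = ‖f - f'‖ := norm_sub_rev f' f
      have := hf'.le
      linarith
    have hgapbound : ‖f - f'‖ * ‖g‖ + ‖f'‖ * ‖g - g'‖ ≤ ε := by
      have h1 : ‖f - f'‖ * ‖g‖ ≤ δ * ‖g‖ :=
        mul_le_mul_of_nonneg_right hf'.le (norm_nonneg _)
      have h2 : ‖f'‖ * ‖g - g'‖ ≤ (‖f‖ + 1) * δ := by
        apply mul_le_mul hf'n hg'.le (norm_nonneg _) (by positivity)
      have h3 : δ * ‖g‖ + (‖f‖ + 1) * δ ≤ δ * (‖f‖ + ‖g‖ + 2) := by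
        nlinarith [hδpos.le]
      linarith
    refine ⟨_, _, hT, fun n => ?_, ?_⟩
    · calc ‖(∫ y, W (q n) y * (f y * (starRingEnd ℂ) (g y)) ∂ν)
            - ∫ y, W (q n) y * (f' y * (starRingEnd ℂ) (g' y)) ∂ν‖
          ≤ ‖f - f'‖ * ‖g‖ + ‖f'‖ * ‖g - g'‖ :=
            hgap f g f' g' (W (q n)) ((hWm (q n)).aestronglyMeasurable)
              (Eventually.of_forall fun y => (hWnorm (q n) y).le)
        _ ≤ ε := hgapbound
    · have h5 := hgap f g f' g' (fun _ => 1) aestronglyMeasurable_const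
        (Eventually.of_forall fun y => by norm_num)
      simp only [one_mul] at h5
      calc ‖(c : ℂ) * (∫ y, f y * (starRingEnd ℂ) (g y) ∂ν)
            - (c : ℂ) * ∫ y, f' y * (starRingEnd ℂ) (g' y) ∂ν‖
          = ‖(c : ℂ)‖ * ‖(∫ y, f y * (starRingEnd ℂ) (g y) ∂ν)
              - ∫ y, f' y * (starRingEnd ℂ) (g' y) ∂ν‖ := by
            rw [← norm_mul, mul_sub]
        _ ≤ 1 * (‖f - f'‖ * ‖g‖ + ‖f'‖ * ‖g - g'‖) := by
            apply mul_le_mul _ h5 (norm_nonneg _) one_pos.le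
            rw [Complex.norm_real, Real.norm_eq_abs]
            exact hc
        _ ≤ 1 * ε := by
            apply mul_le_mul_of_nonneg_left hgapbound one_pos.le
        _ = ε := one_mul ε
  -- conclusion
  intro ξ η
  have hmemcomp : ∀ n : ℕ, MemLp (fun y => ξ ((⇑S)^[q n] y)) 2 ν := fun n =>
    (Lp.memLp ξ).comp_measurePreserving (hSi (q n))
  have i5 : ∀ n : ℕ, Integrable
      (fun y => W (q n) y * (ξ ((⇑S)^[q n] y) * (starRingEnd ℂ) (η y))) ν := fun n =>
    (mulInt _ _ (hmemcomp n) (memConj _ (Lp.memLp η))).bdd_mul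
      ((hWm (q n)).aestronglyMeasurable)
      (Eventually.of_forall fun y => (hWnorm (q n) y).le)
  have i6 : ∀ n : ℕ, Integrable
      (fun y => W (q n) y * (ξ y * (starRingEnd ℂ) (η y))) ν := fun n =>
    (mulInt _ _ (Lp.memLp ξ) (memConj _ (Lp.memLp η))).bdd_mul
      ((hWm (q n)).aestronglyMeasurable)
      (Eventually.of_forall fun y => (hWnorm (q n) y).le)
  have hdiff2 : ∀ n : ℕ,
      (∫ y, W (q n) y * (ξ ((⇑S)^[q n] y) * (starRingEnd ℂ) (η y)) ∂ν)
        - (∫ y, W (q n) y * (ξ y * (starRingEnd ℂ) (η y)) ∂ν)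
      = ∫ y, W (q n) y * ((ξ ((⇑S)^[q n] y) - ξ y) * (starRingEnd ℂ) (η y)) ∂ν := by
    intro n
    rw [← integral_sub (i5 n) (i6 n)]
    refine integral_congr_ae (Eventually.of_forall fun y => ?_)
    ring
  have hb2 : ∀ n : ℕ, ‖(∫ y, W (q n) y * (ξ ((⇑S)^[q n] y) * (starRingEnd ℂ) (η y)) ∂ν)
        - (∫ y, W (q n) y * (ξ y * (starRingEnd ℂ) (η y)) ∂ν)‖
      ≤ (eLpNorm (fun y => ξ ((⇑S)^[q n] y) - ξ y) 2 ν).toReal * ‖η‖ := by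
    intro n
    rw [hdiff2 n]
    have hest := est (W (q n)) (fun y => ξ ((⇑S)^[q n] y) - ξ y) (⇑η)
      ((hWm (q n)).aestronglyMeasurable)
      (Eventually.of_forall fun y => (hWnorm (q n) y).le)
      ((hmemcomp n).sub (Lp.memLp ξ)) (Lp.memLp η)
    rwa [h2R] at hest
  have h8 : Tendsto (fun n : ℕ =>
      (∫ y, W (q n) y * (ξ ((⇑S)^[q n] y) * (starRingEnd ℂ) (η y)) ∂ν)
        - (∫ y, W (q n) y * (ξ y * (starRingEnd ℂ) (η y)) ∂ν)) atTop (nhds 0) := by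
    apply squeeze_zero_norm hb2
    simpa using (hqrigR ξ).mul_const ‖η‖
  have h10 := h8.add (hPall ξ η)
  have h11 : Tendsto (fun n : ℕ =>
      ∫ y, W (q n) y * (ξ ((⇑S)^[q n] y) * (starRingEnd ℂ) (η y)) ∂ν) atTop
      (nhds ((c : ℂ) * ∫ y, ξ y * (starRingEnd ℂ) (η y) ∂ν)) := by
    simpa using h10
  refine h11.congr fun n => ?_
  refine integral_congr_ae (Eventually.of_forall fun y => ?_)
  simp only [hWdef]
  ring
end

section
/- For each k ∈ ℕ the limit γ(k) := lim_{N→∞} (1/N) Σ_{n=1}^{N} (−1)^{s₂(n+k)+s₂(n)} exists; moreover γ(0) = 1, γ(1) = −1/3, and for every k ≥ 0 one has γ(2k) = γ(k) and γ(2k+1) = −(γ(k) + γ(k+1))/2. -/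
open Filter


noncomputable def tm (n : ℕ) : ℝ := (-1 : ℝ) ^ ((Nat.digits 2 n).sum)

lemma tm_two_mul (n : ℕ) : tm (2 * n) = tm n := by
  rcases Nat.eq_zero_or_pos n with h | h
  · simp [h]
  · unfold tm
    rw [Nat.digits_def' (by norm_num) (by omega)]
    simp [Nat.mul_div_cancel_left, Nat.mul_mod_right]

lemma tm_two_mul_add_one (n : ℕ) : tm (2 * n + 1) = -tm n := by
  unfold tm
  rw [Nat.digits_def' (by norm_num) (by omega)]
  have h1 : (2 * n + 1) % 2 = 1 := by omega
  have h2 : (2 * n + 1) / 2 = n := by omega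
  rw [h1, h2]
  simp [pow_succ, pow_add]

lemma tm_sq (n : ℕ) : tm n * tm n = 1 := by
  unfold tm
  rw [← pow_add, ← two_mul, pow_mul]
  norm_num

lemma abs_tm (n : ℕ) : |tm n| = 1 := by
  unfold tm; rw [abs_pow]; simp

noncomputable def gam : ℕ → ℝ
  | 0 => 1
  | 1 => -1/3
  | n+2 =>
    if h : (n+2) % 2 = 0 then gam ((n+2)/2)
    else -(gam ((n+2)/2) + gam ((n+2)/2 + 1))/2
decreasing_by
  · omega
  · omega
  · omega

lemma gam_zero : gam 0 = 1 := by simp [gam]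
lemma gam_one : gam 1 = -1/3 := by simp [gam]

lemma gam_two_mul (k : ℕ) : gam (2 * k) = gam k := by
  match k with
  | 0 => rfl
  | k+1 =>
    have : 2 * (k+1) = (2*k) + 2 := by ring
    rw [this, gam]
    have h : (2*k+2) % 2 = 0 := by omega
    rw [dif_pos h]
    congr 1
    omega

lemma gam_two_mul_add_one (k : ℕ) : gam (2 * k + 1) = -(gam k + gam (k+1))/2 := by
  match k with
  | 0 =>
    rw [gam_zero, gam_one]; norm_num [gam_one]
  | k+1 =>
    have : 2 * (k+1) + 1 = (2*k+1) + 2 := by ring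
    rw [this, gam]
    have h : ¬ ((2*k+1+2) % 2 = 0) := by omega
    rw [dif_neg h]
    have h1 : (2*k+1+2)/2 = k+1 := by omega
    rw [h1]

lemma abs_gam_le (k : ℕ) : |gam k| ≤ 1 := by
  induction k using Nat.strong_induction_on with
  | _ k ih =>
    match k with
    | 0 => rw [gam_zero]; norm_num
    | 1 => rw [gam_one]; rw [abs_div]; norm_num
    | k+2 =>
      rcases Nat.even_or_odd (k+2) with ⟨m, hm⟩ | ⟨m, hm⟩
      · have : k+2 = 2*m := by omega
        rw [this, gam_two_mul]
        exact ih m (by omega)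
      · have : k+2 = 2*m+1 := by omega
        rw [this, gam_two_mul_add_one]
        have h1 := ih m (by omega)
        have h2 := ih (m+1) (by omega)
        rw [abs_div, abs_neg]
        calc |gam m + gam (m+1)| / |(2:ℝ)| ≤ (|gam m| + |gam (m+1)|)/2 := by
              rw [abs_two]; gcongr; exact abs_add_le _ _
          _ ≤ 1 := by linarith

noncomputable def fc (k N : ℕ) : ℝ := ∑ n ∈ Finset.range N, tm (n + k) * tm n

lemma fc_zero (k : ℕ) : fc k 0 = 0 := by simp [fc]

lemma fc_succ (k N : ℕ) : fc k (N + 1) = fc k N + tm (N + k) * tm N := by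
  simp [fc, Finset.sum_range_succ]

lemma fc_even (k N : ℕ) : fc (2*k) (2*N) = 2 * fc k N := by
  induction N with
  | zero => simp [fc]
  | succ N ih =>
    have h : 2 * (N+1) = (2*N) + 1 + 1 := by ring
    rw [h, fc_succ, fc_succ, ih, fc_succ]
    have e1 : 2*N + 2*k = 2*(N+k) := by ring
    have e2 : 2*N + 1 + 2*k = 2*(N+k) + 1 := by ring
    rw [e1, e2, tm_two_mul (N+k), tm_two_mul N, tm_two_mul_add_one (N+k),
      tm_two_mul_add_one N]
    ring

lemma fc_odd (k N : ℕ) : fc (2*k+1) (2*N) = -(fc k N + fc (k+1) N) := by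
  induction N with
  | zero => simp [fc]
  | succ N ih =>
    have h : 2 * (N+1) = (2*N) + 1 + 1 := by ring
    rw [h, fc_succ, fc_succ, ih, fc_succ, fc_succ]
    have e1 : 2*N + (2*k+1) = 2*(N+k) + 1 := by ring
    have e2 : 2*N + 1 + (2*k+1) = 2*(N+(k+1)) := by ring
    have e3 : N + (k+1) = N + 1 + k := by ring
    rw [e1, e2, e3, tm_two_mul (N+1+k), tm_two_mul N, tm_two_mul_add_one (N+k),
      tm_two_mul_add_one N]
    ring

noncomputable def ec (k N : ℕ) : ℝ := fc k N - gam k * N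

lemma ec_zero (k : ℕ) : ec k 0 = 0 := by simp [ec, fc_zero]

lemma ec_step (k N : ℕ) : |ec k (N+1) - ec k N| ≤ 2 := by
  have h : ec k (N+1) - ec k N = tm (N+k) * tm N - gam k := by
    simp [ec, fc_succ]; push_cast; ring
  rw [h]
  have h1 : |tm (N+k) * tm N| = 1 := by rw [abs_mul, abs_tm, abs_tm]; norm_num
  calc |tm (N+k) * tm N - gam k| ≤ |tm (N+k) * tm N| + |gam k| := abs_sub _ _
    _ ≤ 1 + 1 := by rw [h1]; gcongr; exact abs_gam_le k
    _ = 2 := by norm_num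

lemma ec_shift_zero (N : ℕ) : ec 0 N = 0 := by
  have : fc 0 N = N := by
    unfold fc
    rw [Finset.sum_congr rfl (fun n _ => by rw [Nat.add_zero, tm_sq])]
    simp
  simp [ec, this, gam_zero]

lemma ec_even (k M : ℕ) : ec (2*k) (2*M) = 2 * ec k M := by
  simp only [ec, fc_even, gam_two_mul]; push_cast; ring

lemma ec_odd (k M : ℕ) : ec (2*k+1) (2*M) = -(ec k M + ec (k+1) M) := by
  simp only [ec, fc_odd, gam_two_mul_add_one]; push_cast; ring

lemma log_two_mul (M : ℕ) (hM : 1 ≤ M) : Nat.log 2 (2*M) = Nat.log 2 M + 1 := by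
  rw [mul_comm]; exact Nat.log_mul_base (by norm_num) (by omega)

lemma log_two_mul_add_one (M : ℕ) (hM : 1 ≤ M) :
    Nat.log 2 (2*M+1) = Nat.log 2 M + 1 := by
  have h1 : 2 ^ (Nat.log 2 M + 1) ≤ 2*M + 1 := by
    have := Nat.pow_log_le_self 2 (show M ≠ 0 by omega)
    rw [pow_succ]; omega
  have h2 : 2*M + 1 < 2 ^ (Nat.log 2 M + 1 + 1) := by
    have := Nat.lt_pow_succ_log_self (show 1 < 2 by norm_num) M
    rw [pow_succ] at this
    omega
  exact Nat.log_eq_of_pow_le_of_lt_pow h1 h2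

lemma helper_bound (E : ℕ → ℝ) (D : ℝ) (hD : 0 ≤ D) (h0 : E 0 = 0)
    (hstep : ∀ N, |E (N+1) - E N| ≤ 2)
    (hdouble : ∀ M, 1 ≤ M → |E (2*M)| ≤ D * (Nat.log 2 M + 1)) :
    ∀ N, |E N| ≤ (D+2) * (Nat.log 2 N + 1) := by
  intro N
  have hpos : ∀ m : ℕ, (0:ℝ) ≤ (Nat.log 2 m : ℝ) + 1 := fun m => by positivity
  match N with
  | 0 => rw [h0]; simp; nlinarith [hpos 0]
  | 1 =>
    have := hstep 0
    rw [h0, sub_zero] at this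
    have : |E 1| ≤ 2 := this
    nlinarith [hpos 1]
  | (N+2) =>
    rcases Nat.even_or_odd (N+2) with ⟨m, hm⟩ | ⟨m, hm⟩
    · have hm1 : 1 ≤ m := by omega
      have h2 : N+2 = 2*m := by omega
      have hb := hdouble m hm1
      rw [h2, log_two_mul m hm1]
      push_cast
      nlinarith [hpos m]
    · have hm1 : 1 ≤ m := by omega
      have h2 : N+2 = 2*m+1 := by omega
      have hb := hdouble m hm1
      have hs := hstep (2*m)
      rw [h2, log_two_mul_add_one m hm1]
      have : |E (2*m+1)| ≤ |E (2*m)| + 2 := by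
        calc |E (2*m+1)| = |(E (2*m+1) - E (2*m)) + E (2*m)| := by ring_nf
          _ ≤ |E (2*m+1) - E (2*m)| + |E (2*m)| := abs_add_le _ _
          _ ≤ 2 + |E (2*m)| := by linarith
          _ = |E (2*m)| + 2 := by ring
      push_cast
      nlinarith [hpos m]

lemma ec_one_double (m : ℕ) : ec 1 (2*m) = -(ec 1 m) := by
  have h := ec_odd 0 m
  norm_num at h
  rw [h, ec_shift_zero]
  ring

lemma ec_one_bound : ∀ N, |ec 1 N| ≤ 2 * (Nat.log 2 N + 1) := by
  intro N
  induction N using Nat.strong_induction_on with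
  | _ N ih =>
    have hpos : ∀ m : ℕ, (0:ℝ) ≤ (Nat.log 2 m : ℝ) + 1 := fun m => by positivity
    match N with
    | 0 => rw [ec_zero]; simpa using by nlinarith [hpos 0]
    | 1 =>
      have := ec_step 1 0
      rw [ec_zero, sub_zero] at this
      nlinarith [hpos 1]
    | (N+2) =>
      rcases Nat.even_or_odd (N+2) with ⟨m, hm⟩ | ⟨m, hm⟩
      · have hm1 : 1 ≤ m := by omega
        have h2 : N+2 = 2*m := by omega
        have hb := ih m (by omega)
        rw [h2, log_two_mul m hm1, ec_one_double, abs_neg]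
        push_cast
        nlinarith [hpos m]
      · have hm1 : 1 ≤ m := by omega
        have h2 : N+2 = 2*m+1 := by omega
        have hb := ih m (by omega)
        have hs := ec_step 1 (2*m)
        rw [h2, log_two_mul_add_one m hm1]
        have h3 : |ec 1 (2*m+1)| ≤ |ec 1 (2*m)| + 2 := by
          calc |ec 1 (2*m+1)| = |(ec 1 (2*m+1) - ec 1 (2*m)) + ec 1 (2*m)| := by ring_nf
            _ ≤ |ec 1 (2*m+1) - ec 1 (2*m)| + |ec 1 (2*m)| := abs_add_le _ _
            _ ≤ |ec 1 (2*m)| + 2 := by linarith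
        rw [ec_one_double, abs_neg] at h3
        push_cast
        nlinarith [hpos m]

lemma ec_master : ∀ k, ∃ C : ℝ, 0 ≤ C ∧ ∀ N, |ec k N| ≤ C * (Nat.log 2 N + 1) := by
  intro k
  induction k using Nat.strong_induction_on with
  | _ k ih =>
    match k with
    | 0 =>
      exact ⟨0, le_refl 0, fun N => by rw [ec_shift_zero]; simp⟩
    | 1 => exact ⟨2, by norm_num, ec_one_bound⟩
    | (k+2) =>
      rcases Nat.even_or_odd (k+2) with ⟨j, hj⟩ | ⟨j, hj⟩
      · have hjlt : j < k+2 := by omega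
        obtain ⟨C, hC0, hC⟩ := ih j hjlt
        have h2 : k+2 = 2*j := by omega
        refine ⟨2*C + 2, by linarith, ?_⟩
        rw [h2]
        apply helper_bound _ _ (by linarith) (ec_zero _) (ec_step _)
        intro M hM
        rw [ec_even, abs_mul, abs_two]
        have := hC M
        nlinarith [abs_nonneg (ec j M)]
      · have hjlt : j < k+2 := by omega
        have hj1lt : j+1 < k+2 := by omega
        obtain ⟨C, hC0, hC⟩ := ih j hjlt
        obtain ⟨C', hC0', hC'⟩ := ih (j+1) hj1lt
        have h2 : k+2 = 2*j+1 := by omega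
        refine ⟨C + C' + 2, by linarith, ?_⟩
        rw [h2]
        apply helper_bound _ _ (by linarith) (ec_zero _) (ec_step _)
        intro M hM
        rw [ec_odd, abs_neg]
        calc |ec j M + ec (j+1) M| ≤ |ec j M| + |ec (j+1) M| := abs_add_le _ _
          _ ≤ (C + C') * (Nat.log 2 M + 1) := by
              have := hC M; have := hC' M
              have hp : (0:ℝ) ≤ (Nat.log 2 M : ℝ) + 1 := by positivity
              nlinarith

lemma natlog_le_real_log (n : ℕ) (hn : 1 ≤ n) :
    (Nat.log 2 n : ℝ) * Real.log 2 ≤ Real.log n := by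
  have h := Nat.pow_log_le_self 2 (show n ≠ 0 by omega)
  have hcast : ((2:ℕ) ^ Nat.log 2 n : ℝ) ≤ (n : ℝ) := by exact_mod_cast h
  have := Real.log_le_log (by positivity) hcast
  rwa [Real.log_pow] at this

lemma log_tendsto :
    Tendsto (fun N : ℕ => ((Nat.log 2 (N+1) : ℝ) + 1) / N) atTop (nhds 0) := by
  have hlog : Tendsto (fun N : ℕ => Real.log ((N:ℝ)+1) / ((N:ℝ)+1)) atTop (nhds 0) := by
    have h1 : Tendsto (fun x : ℝ => Real.log x / x) atTop (nhds 0) := by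
      simpa [Function.comp] using
        Real.isLittleO_log_id_atTop.tendsto_div_nhds_zero
    exact h1.comp (tendsto_atTop_add_const_right atTop 1 tendsto_natCast_atTop_atTop)
  have hbig : Tendsto (fun N : ℕ => 8 * (Real.log ((N:ℝ)+1) / ((N:ℝ)+1))) atTop (nhds 0) := by
    simpa using hlog.const_mul 8
  apply squeeze_zero' ?_ ?_ hbig
  · filter_upwards [eventually_ge_atTop 1] with N hN
    positivity
  · filter_upwards [eventually_ge_atTop 1] with N hN
    have hN1 : (1:ℝ) ≤ (N:ℝ) := by exact_mod_cast hN
    have hlog2 : (0:ℝ) < Real.log 2 := Real.log_pos (by norm_num)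
    have hl2 : Real.log 2 ≤ Real.log ((N:ℝ)+1) := by
      apply Real.log_le_log (by norm_num)
      linarith
    have hnat := natlog_le_real_log (N+1) (by omega)
    push_cast at hnat
    have hhalf : Real.log 2 ≥ 1/2 := by
      have := Real.log_two_gt_d9
      linarith
    -- (Nat.log 2 (N+1) : ℝ) + 1 ≤ 4 * Real.log (N+1)
    have hkey : (Nat.log 2 (N+1) : ℝ) + 1 ≤ 4 * Real.log ((N:ℝ)+1) := by
      have h1 : (Nat.log 2 (N+1) : ℝ) ≤ Real.log ((N:ℝ)+1) / Real.log 2 := by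
        rw [le_div_iff₀ hlog2]; exact hnat
      have h2 : Real.log ((N:ℝ)+1) / Real.log 2 ≤ 2 * Real.log ((N:ℝ)+1) := by
        rw [div_le_iff₀ hlog2]
        nlinarith [Real.log_nonneg (show (1:ℝ) ≤ (N:ℝ)+1 by linarith)]
      have h3 : (1:ℝ) ≤ 2 * Real.log ((N:ℝ)+1) := by nlinarith
      linarith
    have hNpos : (0:ℝ) < (N:ℝ) := by linarith
    rw [div_le_iff₀ hNpos]
    have hlogpos : 0 ≤ Real.log ((N:ℝ)+1) := Real.log_nonneg (by linarith)
    have : 8 * (Real.log ((N:ℝ)+1) / ((N:ℝ)+1)) * (N:ℝ)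
        = 8 * Real.log ((N:ℝ)+1) * ((N:ℝ) / ((N:ℝ)+1)) := by ring
    rw [this]
    have hfrac : (1:ℝ)/2 ≤ (N:ℝ)/((N:ℝ)+1) := by
      rw [div_le_div_iff₀ (by norm_num) (by linarith)]
      linarith
    nlinarith

lemma sum_icc_eq (k N : ℕ) :
    ∑ n ∈ Finset.Icc 1 N,
        (-1 : ℝ) ^ ((Nat.digits 2 (n + k)).sum + (Nat.digits 2 n).sum)
      = fc k (N+1) - tm k := by
  have hsummand : ∀ n : ℕ,
      (-1 : ℝ) ^ ((Nat.digits 2 (n + k)).sum + (Nat.digits 2 n).sum)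
        = tm (n + k) * tm n := fun n => by rw [pow_add]; rfl
  have h1 : fc k (N+1) = tm (0 + k) * tm 0 + ∑ n ∈ Finset.range N, tm (n+1+k) * tm (n+1) := by
    unfold fc
    rw [Finset.sum_range_succ']
    ring
  have h2 : ∑ n ∈ Finset.Icc 1 N,
      (-1 : ℝ) ^ ((Nat.digits 2 (n + k)).sum + (Nat.digits 2 n).sum)
        = ∑ n ∈ Finset.range N, tm (n+1+k) * tm (n+1) := by
    rw [← Finset.Ico_add_one_right_eq_Icc, Finset.sum_Ico_eq_sum_range]
    have hr : N + 1 - 1 = N := by omega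
    rw [hr]
    apply Finset.sum_congr rfl
    intro n _
    rw [hsummand]
    congr 2 <;> omega
  rw [h2, h1]
  have : tm (0 + k) = tm k := by rw [Nat.zero_add]
  rw [this]
  have h0 : tm 0 = 1 := by simp [tm]
  rw [h0]
  ring

theorem thue_morse_aux :
    ∃ γ : ℕ → ℝ,
      (∀ k : ℕ,
        Tendsto (fun N : ℕ => (N : ℝ)⁻¹ *
            ∑ n ∈ Finset.Icc 1 N,
              (-1 : ℝ) ^ ((Nat.digits 2 (n + k)).sum + (Nat.digits 2 n).sum))
          atTop (nhds (γ k))) ∧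
      γ 0 = 1 ∧ γ 1 = -1/3 ∧
      (∀ k : ℕ, γ (2 * k) = γ k ∧ γ (2 * k + 1) = -(γ k + γ (k + 1)) / 2) := by
  refine ⟨gam, ?_, gam_zero, gam_one, fun k => ⟨gam_two_mul k, gam_two_mul_add_one k⟩⟩
  intro k
  obtain ⟨C, hC0, hC⟩ := ec_master k
  rw [tendsto_iff_dist_tendsto_zero]
  have hbnd : Tendsto (fun N : ℕ =>
      C * (((Nat.log 2 (N+1) : ℝ) + 1) / N) + 2 * ((N:ℝ))⁻¹) atTop (nhds 0) := by
    have := (log_tendsto.const_mul C).add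
      ((tendsto_inv_atTop_nhds_zero_nat).const_mul 2)
    simpa using this
  apply squeeze_zero' ?_ ?_ hbnd
  · filter_upwards with N; exact dist_nonneg
  · filter_upwards [eventually_ge_atTop 1] with N hN
    have hNpos : (0:ℝ) < (N:ℝ) := by exact_mod_cast Nat.pos_of_ne_zero (by omega)
    rw [sum_icc_eq, Real.dist_eq]
    have heq : (N:ℝ)⁻¹ * (fc k (N+1) - tm k) - gam k
        = (ec k (N+1) + gam k - tm k) / N := by
      field_simp [ec]
      unfold ec
      push_cast
      ring
    rw [heq, abs_div, abs_of_pos hNpos]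
    have h1 : |ec k (N+1) + gam k - tm k| ≤ C * ((Nat.log 2 (N+1) : ℝ) + 1) + 2 := by
      calc |ec k (N+1) + gam k - tm k| ≤ |ec k (N+1)| + |gam k| + |tm k| := by
            calc _ ≤ |ec k (N+1) + gam k| + |tm k| := abs_sub _ _
              _ ≤ _ := by gcongr; exact abs_add_le _ _
        _ ≤ C * ((Nat.log 2 (N+1) : ℝ) + 1) + 1 + 1 := by
            gcongr
            · exact hC (N+1)
            · exact abs_gam_le k
            · exact le_of_eq (abs_tm k)
        _ = C * ((Nat.log 2 (N+1) : ℝ) + 1) + 2 := by ring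
    calc |ec k (N+1) + gam k - tm k| / N
        ≤ (C * ((Nat.log 2 (N+1) : ℝ) + 1) + 2) / N := by gcongr
      _ = C * (((Nat.log 2 (N+1) : ℝ) + 1) / N) + 2 * ((N:ℝ))⁻¹ := by
          field_simp



/-- For each `k ∈ ℕ` the limit
`γ(k) = lim_{N→∞} (1/N) Σ_{n=1}^{N} (−1)^{s₂(n+k)+s₂(n)}` exists; moreover `γ(0) = 1`,
`γ(1) = −1/3`, and for every `k ≥ 0` one has `γ(2k) = γ(k)` and
`γ(2k+1) = −(γ(k) + γ(k+1))/2`. Here `s₂(n)` is the number of ones in the binary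
expansion of `n`. -/
theorem thue_morse_correlations_exist :
    ∃ γ : ℕ → ℝ,
      (∀ k : ℕ,
        Tendsto (fun N : ℕ => (N : ℝ)⁻¹ *
            ∑ n ∈ Finset.Icc 1 N,
              (-1 : ℝ) ^ ((Nat.digits 2 (n + k)).sum + (Nat.digits 2 n).sum))
          atTop (nhds (γ k))) ∧
      γ 0 = 1 ∧ γ 1 = -1/3 ∧
      (∀ k : ℕ, γ (2 * k) = γ k ∧ γ (2 * k + 1) = -(γ k + γ (k + 1)) / 2) := by
  exact thue_morse_aux
end

section
/- Let p ≥ 2 be a natural number and let m : ℕ → ℝ take values in {−1, 1} and be strongly p-multiplicative, i.e. m(a·p^j + b) = m(a)·m(b) for all a, b, j ∈ ℕ with b < p^j. Fix k ∈ ℕ and suppose the limit γ = lim_{N→∞} (1/N) Σ_{n=1}^{N} m(n+k)·m(n) exists. Then for every j ∈ ℕ the limit lim_{N→∞} (1/N) Σ_{n=1}^{N} m(n + k·p^j)·m(n) exists and equals γ. -/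
open Filter

lemma aux_step (p : ℕ) (hp : 2 ≤ p) (m : ℕ → ℝ) (hm : ∀ n, m n = 1 ∨ m n = -1)
    (hmult : ∀ a b : ℕ, b < p → m (a * p + b) = m a * m b)
    (K : ℕ) (γ : ℝ)
    (hγ : Tendsto (fun N : ℕ => (N : ℝ)⁻¹ * ∑ n ∈ Finset.Icc 1 N, m (n + K) * m n)
      atTop (nhds γ)) :
    Tendsto (fun N : ℕ => (N : ℝ)⁻¹ * ∑ n ∈ Finset.Icc 1 N, m (n + K * p) * m n)
      atTop (nhds γ) := by
  set g : ℕ → ℝ := fun a => m (a + K) * m a with hg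
  have hm1 : ∀ x, m x * m x = 1 := by
    intro x; rcases hm x with h | h <;> rw [h] <;> norm_num
  have hgb : ∀ a, |g a| ≤ 1 := by
    intro a; rcases hm (a + K) with h | h <;> rcases hm a with h' | h' <;>
      simp [hg, h, h']
  have hsq : ∀ n : ℕ, m (n + K * p) * m n = g (n / p) := by
    intro n
    obtain ⟨q, r, hr, rfl⟩ : ∃ q r, r < p ∧ n = p * q + r :=
      ⟨n / p, n % p, Nat.mod_lt _ (by omega), (Nat.div_add_mod n p).symm⟩
    have hq : (p * q + r) / p = q := by
      rw [Nat.mul_add_div (by omega), Nat.div_eq_of_lt hr, Nat.add_zero]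
    rw [hq]
    have e1 : p * q + r + K * p = (q + K) * p + r := by ring
    have e2 : p * q + r = q * p + r := by ring
    rw [e1, hmult _ _ hr, e2, hmult _ _ hr]
    calc m (q + K) * m r * (m q * m r) = m (q + K) * m q * (m r * m r) := by ring
      _ = g q := by rw [hm1]; simp [hg]
  -- key identity
  have key : ∀ N : ℕ, (∑ n ∈ Finset.Icc 1 N, g (n / p))
      = p * (∑ a ∈ Finset.Icc 1 (N / p), g a) + ((p : ℝ) - 1) * g 0
        + (((N % p : ℕ) : ℝ) + 1 - p) * g (N / p) := by
    intro N
    induction N with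
    | zero => simp; ring
    | succ N ih =>
      rw [Finset.sum_Icc_succ_top (by omega : 1 ≤ N + 1), ih]
      by_cases hr : N % p = p - 1
      · have h1 : (N + 1) % p = 0 := by
          rw [Nat.add_mod, hr, Nat.one_mod_eq_one.mpr (by omega)]
          have hpe : p - 1 + 1 = p := by omega
          rw [hpe, Nat.mod_self]
        have h2 : (N + 1) / p = N / p + 1 := by
          rw [Nat.succ_div, if_pos (Nat.dvd_of_mod_eq_zero h1)]
        rw [h1, h2, hr]
        rw [Finset.sum_Icc_succ_top (Nat.le_add_left 1 (N / p))]
        rw [Nat.cast_sub (by omega : 1 ≤ p), Nat.cast_one, Nat.cast_zero]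
        ring
      · have hlt : N % p < p := Nat.mod_lt _ (by omega)
        have h1 : (N + 1) % p = N % p + 1 := by
          rw [Nat.add_mod, Nat.one_mod_eq_one.mpr (by omega),
            Nat.mod_eq_of_lt (by omega)]
        have h2 : (N + 1) / p = N / p := by
          rw [Nat.succ_div, if_neg, Nat.add_zero]
          intro hd
          obtain ⟨t, ht⟩ := hd
          have h0 : (N + 1) % p = 0 := by rw [ht]; exact Nat.mul_mod_right p t
          omega
        rw [h1, h2]
        push_cast
        ring
  -- limits
  have hdiv : Tendsto (fun N : ℕ => N / p) atTop atTop := by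
    apply tendsto_atTop_atTop.mpr
    intro b
    exact ⟨p * b, fun N hN => (Nat.le_div_iff_mul_le (by omega)).mpr
      (by rwa [Nat.mul_comm] at hN)⟩
  have hB : Tendsto (fun N : ℕ => ((N / p : ℕ) : ℝ)⁻¹
      * ∑ a ∈ Finset.Icc 1 (N / p), g a) atTop (nhds γ) := hγ.comp hdiv
  have hmod0 : Tendsto (fun N : ℕ => ((N % p : ℕ) : ℝ) / N) atTop (nhds 0) := by
    apply squeeze_zero (fun N => by positivity) (fun N => ?_)
      (tendsto_const_div_atTop_nhds_zero_nat (p : ℝ))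
    rcases Nat.eq_zero_or_pos N with h | h
    · simp [h]
    · gcongr
      · exact_mod_cast Nat.cast_le.mpr (Nat.mod_lt _ (by omega : 0 < p)).le
  have hA : Tendsto (fun N : ℕ => ((p * (N / p) : ℕ) : ℝ) / N) atTop (nhds 1) := by
    have heq : ∀ᶠ N : ℕ in atTop,
        1 - ((N % p : ℕ) : ℝ) / N = ((p * (N / p) : ℕ) : ℝ) / N := by
      filter_upwards [eventually_gt_atTop 0] with N hN
      have hd := Nat.div_add_mod N p
      have hNR : (N : ℝ) ≠ 0 := by positivity
      have hc : ((p * (N / p) : ℕ) : ℝ) = (N : ℝ) - ((N % p : ℕ) : ℝ) := by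
        have : ((p * (N / p) : ℕ) : ℝ) + ((N % p : ℕ) : ℝ) = (N : ℝ) := by
          exact_mod_cast congrArg (Nat.cast : ℕ → ℝ) hd
        linarith
      rw [hc, sub_div, div_self hNR]
    have := (tendsto_const_nhds.sub hmod0 :
      Tendsto (fun N : ℕ => 1 - ((N % p : ℕ) : ℝ) / N) atTop (nhds (1 - 0)))
    rw [sub_zero] at this
    exact this.congr' heq
  have hE : Tendsto (fun N : ℕ => (N : ℝ)⁻¹ * (((p : ℝ) - 1) * g 0
      + (((N % p : ℕ) : ℝ) + 1 - p) * g (N / p))) atTop (nhds 0) := by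
    apply squeeze_zero_norm (fun N => ?_) (tendsto_const_div_atTop_nhds_zero_nat (2 * (p : ℝ)))
    have hb1 : |((p : ℝ) - 1) * g 0| ≤ (p : ℝ) := by
      rw [abs_mul]
      calc |(p : ℝ) - 1| * |g 0| ≤ (p : ℝ) * 1 := by
            apply mul_le_mul ?_ (hgb 0) (abs_nonneg _) (by positivity)
            rw [abs_of_nonneg (by norm_num; exact_mod_cast Nat.one_le_iff_ne_zero.mpr (by omega))]
            · linarith [(by exact_mod_cast hp : (2:ℝ) ≤ p)]
        _ = (p : ℝ) := by ring
    have hb2 : |(((N % p : ℕ) : ℝ) + 1 - p) * g (N / p)| ≤ (p : ℝ) := by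
      rw [abs_mul]
      have hml : ((N % p : ℕ) : ℝ) ≤ (p : ℝ) - 1 := by
        have : N % p ≤ p - 1 := by
          have := Nat.mod_lt N (by omega : 0 < p); omega
        calc ((N % p : ℕ) : ℝ) ≤ ((p - 1 : ℕ) : ℝ) := by exact_mod_cast this
          _ = (p : ℝ) - 1 := by rw [Nat.cast_sub (by omega)]; norm_num
      have hm0 : (0 : ℝ) ≤ ((N % p : ℕ) : ℝ) := by positivity
      calc |((N % p : ℕ) : ℝ) + 1 - p| * |g (N / p)| ≤ (p : ℝ) * 1 := by
            apply mul_le_mul ?_ (hgb _) (abs_nonneg _) (by positivity)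
            rw [abs_le]
            constructor <;> [linarith; linarith]
        _ = (p : ℝ) := by ring
    calc ‖(N : ℝ)⁻¹ * (((p : ℝ) - 1) * g 0
          + (((N % p : ℕ) : ℝ) + 1 - p) * g (N / p))‖
        = (N : ℝ)⁻¹ * |((p : ℝ) - 1) * g 0
          + (((N % p : ℕ) : ℝ) + 1 - p) * g (N / p)| := by
          rw [norm_mul, Real.norm_eq_abs, Real.norm_eq_abs,
            abs_of_nonneg (by positivity : (0:ℝ) ≤ (N : ℝ)⁻¹)]
      _ ≤ (N : ℝ)⁻¹ * (2 * p) := by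
          apply mul_le_mul_of_nonneg_left ?_ (by positivity)
          calc _ ≤ |((p : ℝ) - 1) * g 0| + |(((N % p : ℕ) : ℝ) + 1 - p) * g (N / p)| :=
                abs_add_le _ _
            _ ≤ (p : ℝ) + p := add_le_add hb1 hb2
            _ = 2 * p := by ring
      _ = 2 * (p : ℝ) / (N : ℝ) := by ring
  -- combine
  have heq : ∀ᶠ N : ℕ in atTop,
      ((p * (N / p) : ℕ) : ℝ) / N * (((N / p : ℕ) : ℝ)⁻¹
        * ∑ a ∈ Finset.Icc 1 (N / p), g a)
      + (N : ℝ)⁻¹ * (((p : ℝ) - 1) * g 0 + (((N % p : ℕ) : ℝ) + 1 - p) * g (N / p))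
      = (N : ℝ)⁻¹ * ∑ n ∈ Finset.Icc 1 N, m (n + K * p) * m n := by
    filter_upwards [eventually_ge_atTop p] with N hN
    have hM1 : 1 ≤ N / p := (Nat.le_div_iff_mul_le (by omega)).mpr (by omega)
    have hN1 : 0 < N := by omega
    have hMne : ((N / p : ℕ) : ℝ) ≠ 0 := Nat.cast_ne_zero.mpr (by omega)
    have hNne : (N : ℝ) ≠ 0 := by positivity
    rw [Finset.sum_congr rfl (fun n _ => hsq n), key N]
    push_cast
    field_simp
    ring
  refine Tendsto.congr' heq ?_
  have := (hA.mul hB).add hE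
  rw [one_mul, add_zero] at this
  exact this

/-- If `m : ℕ → {−1,1}` is strongly `p`-multiplicative
(`m(a·p^j + b) = m(a)·m(b)` whenever `b < p^j`), `k ∈ ℕ`, and
`γ = lim_N (1/N) Σ_{n=1}^N m(n+k)m(n)` exists, then for every `j` the limit
`lim_N (1/N) Σ_{n=1}^N m(n + k·p^j) m(n)` exists and equals `γ`. -/
theorem strongly_multiplicative_correlation_invariant
    (p : ℕ) (hp : 2 ≤ p) (m : ℕ → ℝ) (hm : ∀ n, m n = 1 ∨ m n = -1)
    (hmult : ∀ a b j : ℕ, b < p ^ j → m (a * p ^ j + b) = m a * m b)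
    (k : ℕ) (γ : ℝ)
    (hγ : Tendsto (fun N : ℕ => (N : ℝ)⁻¹ * ∑ n ∈ Finset.Icc 1 N, m (n + k) * m n)
      atTop (nhds γ)) :
    ∀ j : ℕ,
      Tendsto (fun N : ℕ => (N : ℝ)⁻¹ * ∑ n ∈ Finset.Icc 1 N, m (n + k * p ^ j) * m n)
        atTop (nhds γ) := by

  have hmult1 : ∀ a b : ℕ, b < p → m (a * p + b) = m a * m b := by
    intro a b hb
    have := hmult a b 1 (by simpa using hb)
    simpa using this
  intro j
  induction j with
  | zero => simpa using hγ
  | succ j ih =>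
    have h := aux_step p hp m hm hmult1 (k * p ^ j) γ ih
    have he : ∀ n : ℕ, n + k * p ^ (j + 1) = n + k * p ^ j * p := by
      intro n; ring
    simpa only [he] using h
end

section
/- Let c : ℕ → ℚ be defined by c(0) = 1, c(1) = −1/3, c(2n) = c(n) for n ≥ 1, and c(2n+1) = −(c(n) + c(n+1))/2 for n ≥ 1. Then for all natural numbers n, a ≥ 1, c(2^a·n + 1) = (−1/2)^a·(c(n+1) + c(n)/3) − c(n)/3. -/
/-- Let `c : ℕ → ℚ` satisfy `c(0) = 1`, `c(1) = −1/3`, `c(2n) = c(n)` for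
`n ≥ 1`, and `c(2n+1) = −(c(n)+c(n+1))/2` for `n ≥ 1`. Then for all `n, a ≥ 1`,
`c(2^a·n + 1) = (−1/2)^a·(c(n+1) + c(n)/3) − c(n)/3`. -/
theorem thue_morse_fourier_recurrence
    (c : ℕ → ℚ) (h0 : c 0 = 1) (h1 : c 1 = -1/3)
    (heven : ∀ n : ℕ, 1 ≤ n → c (2 * n) = c n)
    (hodd : ∀ n : ℕ, 1 ≤ n → c (2 * n + 1) = -(c n + c (n + 1)) / 2) :
    ∀ n a : ℕ, 1 ≤ n → 1 ≤ a →
      c (2 ^ a * n + 1) = (-1/2 : ℚ) ^ a * (c (n + 1) + c n / 3) - c n / 3 := by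
  have hpow : ∀ n a : ℕ, 1 ≤ n → c (2 ^ a * n) = c n := by
    intro n a hn
    induction a with
    | zero => simp
    | succ a ih =>
      have h2 : 1 ≤ 2 ^ a * n := Nat.one_le_iff_ne_zero.mpr (by positivity)
      have : 2 ^ (a + 1) * n = 2 * (2 ^ a * n) := by ring
      rw [this, heven _ h2, ih]
  intro n a hn ha
  induction a with
  | zero => omega
  | succ a ih =>
    rcases Nat.eq_zero_or_pos a with rfl | hapos
    · have := hodd n hn
      rw [show (2:ℕ) ^ (0 + 1) * n + 1 = 2 * n + 1 by ring, this]
      ring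
    · have ih' := ih hapos
      have h2 : 1 ≤ 2 ^ a * n := Nat.one_le_iff_ne_zero.mpr (by positivity)
      have heq : 2 ^ (a + 1) * n + 1 = 2 * (2 ^ a * n) + 1 := by ring
      rw [heq, hodd _ h2, hpow n a hn, show 2 ^ a * n + 1 = 2 ^ a * n + 1 from rfl, ih']
      ring
end

section
/- Let c : ℕ → ℚ be defined by c(0) = 1, c(1) = −1/3, c(2n) = c(n) for n ≥ 1, and c(2n+1) = −(c(n) + c(n+1))/2 for n ≥ 1. For every odd K ≥ 5, either c(K) = 0 or v₂(c(K)) ≥ 2 − l(K); moreover, for every odd K ≥ 9, c(K) ≠ 0 and v₂(c(K)) = 2 − l(K). -/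
/-- A rational with 2-adic valuation zero: odd numerator over odd denominator. -/
def OR (x : ℚ) : Prop := ∃ u v : ℤ, Odd u ∧ Odd v ∧ x * v = u

lemma OR.ne_zero {x : ℚ} (h : OR x) : x ≠ 0 := by
  obtain ⟨u, v, hu, hv, hx⟩ := h
  rintro rfl
  rw [zero_mul] at hx
  have : u = 0 := by exact_mod_cast hx.symm
  subst this
  exact (Int.not_odd_iff_even.mpr Even.zero) hu

lemma OR.of_three_mul {x : ℚ} (h : OR (3 * x)) : OR x := by
  obtain ⟨u, v, hu, hv, hx⟩ := h
  exact ⟨u, 3 * v, hu, by exact Odd.mul (by decide) hv, by push_cast; linarith [hx]⟩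

lemma OR.odd_mul {d : ℤ} {x : ℚ} (hd : Odd d) (h : OR x) : OR ((d : ℚ) * x) := by
  obtain ⟨u, v, hu, hv, hx⟩ := h
  exact ⟨d * u, v, hd.mul hu, hv, by push_cast; push_cast at hx; linear_combination (d:ℚ) * hx⟩

lemma OR.lincomb {x y : ℚ} {e d : ℤ} (he : Even e) (hd : Odd d)
    (hx : x = 0 ∨ OR x) (hy : OR y) : OR ((e : ℚ) * x + (d : ℚ) * y) := by
  rcases hx with rfl | hx
  · simpa using hy.odd_mul hd
  · obtain ⟨ux, vx, hux, hvx, hxe⟩ := hx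
    obtain ⟨uy, vy, huy, hvy, hye⟩ := hy
    refine ⟨e * ux * vy + d * uy * vx, vx * vy, ?_, hvx.mul hvy, ?_⟩
    · have h1 : Even (e * (ux * vy)) := he.mul_right _
      rw [← mul_assoc] at h1
      exact h1.add_odd ((hd.mul huy).mul hvx)
    · push_cast; push_cast at hxe hye
      linear_combination ((e : ℚ) * vy) * hxe + ((d : ℚ) * vx) * hye

lemma OR.val {x : ℚ} (h : OR x) : padicValRat 2 x = 0 := by
  obtain ⟨u, v, hu, hv, hx⟩ := h
  have hv0 : (v : ℚ) ≠ 0 := by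
    exact_mod_cast fun h0 => (Int.not_odd_iff_even.mpr (by simp [h0] : Even v)) hv
  have hx0 : x ≠ 0 := OR.ne_zero ⟨u, v, hu, hv, hx⟩
  have hvu : padicValRat 2 (x * v) = padicValRat 2 u := by rw [hx]
  rw [padicValRat.mul hx0 hv0] at hvu
  have h2u : padicValRat 2 (u : ℚ) = 0 := by
    have hnd : ¬ ((2:ℕ):ℤ) ∣ u := by rw [Int.odd_iff] at hu; omega
    rw [padicValRat.of_int, padicValInt.eq_zero_of_not_dvd hnd]; simp
  have h2v : padicValRat 2 (v : ℚ) = 0 := by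
    have hnd : ¬ ((2:ℕ):ℤ) ∣ v := by rw [Int.odd_iff] at hv; omega
    rw [padicValRat.of_int, padicValInt.eq_zero_of_not_dvd hnd]; simp
  rw [h2u, h2v] at hvu; linarith

lemma OR.val_eq {x : ℚ} {k : ℕ} (h : OR (3 * x * 2 ^ k)) :
    x ≠ 0 ∧ padicValRat 2 x = -(k : ℤ) := by
  have hx0 : x ≠ 0 := by
    rintro rfl; exact h.ne_zero (by ring)
  refine ⟨hx0, ?_⟩
  have h3 : (3 : ℚ) ≠ 0 := by norm_num
  have hp : (2 : ℚ) ^ k ≠ 0 := by positivity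
  have := h.val
  rw [padicValRat.mul (mul_ne_zero h3 hx0) hp, padicValRat.mul h3 hx0] at this
  have hv3 : padicValRat 2 (3 : ℚ) = 0 := by
    rw [show ((3:ℚ)) = ((3:ℤ):ℚ) by norm_num, padicValRat.of_int,
      padicValInt.eq_zero_of_not_dvd (by decide)]
    simp
  have hv2 : padicValRat 2 ((2 : ℚ) ^ k) = k := by
    have h22 : padicValRat 2 (2 : ℚ) = 1 := by
      simpa using padicValRat.self (p := 2) (by norm_num)
    rw [padicValRat.pow (2 : ℚ), h22]
    simp
  rw [hv3, hv2] at this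
  push_cast at this ⊢
  linarith

section Formulas
variable (c : ℕ → ℚ)
  (heven : ∀ n : ℕ, 1 ≤ n → c (2 * n) = c n)
  (hodd : ∀ n : ℕ, 1 ≤ n → c (2 * n + 1) = -(c n + c (n + 1)) / 2)

include heven in
lemma cpow : ∀ (a m : ℕ), 1 ≤ m → c (2 ^ a * m) = c m := by
  intro a
  induction a with
  | zero => intro m _; rw [pow_zero, one_mul]
  | succ a ih =>
    intro m hm
    have h1 : 2 ^ (a + 1) * m = 2 * (2 ^ a * m) := by ring
    have h2 : 1 ≤ 2 ^ a * m := Nat.one_le_iff_ne_zero.mpr (by positivity)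
    rw [h1, heven _ h2, ih m hm]

include heven hodd in
lemma fA : ∀ (a m : ℕ), 1 ≤ m →
    3 * c (2 ^ a * m + 1) * 2 ^ a
      = -(c m) * 2 ^ a + (-1 : ℚ) ^ a * (3 * c (m + 1) + c m) := by
  intro a
  induction a with
  | zero => intro m _; ring_nf
  | succ a ih =>
    intro m hm
    have h2 : 1 ≤ 2 ^ a * m := Nat.one_le_iff_ne_zero.mpr (by positivity)
    have h1 : 2 ^ (a + 1) * m + 1 = 2 * (2 ^ a * m) + 1 := by ring_nf
    have ho := hodd _ h2
    rw [h1, ho, cpow c heven a m hm]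
    have ihm := ih m hm
    ring_nf
    ring_nf at ihm
    linear_combination -ihm

include heven hodd in
lemma fB : ∀ (b m : ℕ), 1 ≤ m →
    3 * (3 * c (2 ^ (b + 1) * m + 2) + c (2 ^ (b + 1) * m + 1)) * 2 ^ (b + 1)
      = -4 * (c m) * 2 ^ (b + 1) - 5 * (-1 : ℚ) ^ (b + 1) * (3 * c (m + 1) + c m) := by
  intro b m hm
  have h2 : 1 ≤ 2 ^ b * m + 1 := by omega
  have h1 : 2 ^ (b + 1) * m + 2 = 2 * (2 ^ b * m + 1) := by ring_nf
  have he := heven _ h2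
  rw [h1, he]
  have hAb := fA c heven hodd b m hm
  have hAb1 := fA c heven hodd (b + 1) m hm
  ring_nf
  ring_nf at hAb hAb1
  linear_combination 6 * hAb + hAb1

end Formulas

lemma decomp {K : ℕ} (hK : Odd K) (h5 : 5 ≤ K) :
    1 ≤ padicValNat 2 (K - 1) ∧ Odd ((K - 1) / 2 ^ padicValNat 2 (K - 1)) ∧
      1 ≤ (K - 1) / 2 ^ padicValNat 2 (K - 1) ∧
      K = 2 ^ padicValNat 2 (K - 1) * ((K - 1) / 2 ^ padicValNat 2 (K - 1)) + 1 ∧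
      (K - 1) / 2 ^ padicValNat 2 (K - 1) < K := by
  set n := K - 1 with hn
  have hn0 : n ≠ 0 := by omega
  have hK2 : K % 2 = 1 := Nat.odd_iff.mp hK
  have h2n : 2 ∣ n := by omega
  set a := padicValNat 2 n with ha
  have hdvd : 2 ^ a ∣ n := pow_padicValNat_dvd
  set m := n / 2 ^ a with hm
  have hnm : 2 ^ a * m = n := Nat.mul_div_cancel' hdvd
  have ha1 : 1 ≤ a := one_le_padicValNat_of_dvd (by omega) h2n
  have hm1 : 1 ≤ m := by
    rcases Nat.eq_zero_or_pos m with h | h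
    · exfalso; rw [h, mul_zero] at hnm; omega
    · exact h
  have hmodd : Odd m := by
    rw [Nat.odd_iff]
    by_contra h
    have h2m : 2 ∣ m := by omega
    obtain ⟨t, ht⟩ := h2m
    have : 2 ^ (a + 1) ∣ n := ⟨t, by rw [← hnm, ht]; ring⟩
    exact pow_succ_padicValNat_not_dvd hn0 this
  have hmlt : m < K := by
    have h2a : 2 ≤ 2 ^ a := by
      calc 2 = 2 ^ 1 := (pow_one 2).symm
      _ ≤ 2 ^ a := Nat.pow_le_pow_right (by norm_num) ha1
    have : 2 * m ≤ 2 ^ a * m := Nat.mul_le_mul_right m h2a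
    omega
  exact ⟨ha1, hmodd, hm1, by omega, hmlt⟩

lemma key (c : ℕ → ℚ) (h1 : c 1 = -1/3) (hc2 : c 2 = -1/3) (hc3 : c 3 = 1/3)
    (hc4 : c 4 = -1/3)
    (heven : ∀ n : ℕ, 1 ≤ n → c (2 * n) = c n)
    (hodd : ∀ n : ℕ, 1 ≤ n → c (2 * n + 1) = -(c n + c (n + 1)) / 2)
    (l : ℕ → ℕ) (hl1 : l 1 = 0) (hl3 : l 3 = 1)
    (hlrec : ∀ K : ℕ, Odd K → 3 ≤ K →
      l K = padicValNat 2 (K - 1) + l ((K - 1) / 2 ^ padicValNat 2 (K - 1))) :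
    ∀ K : ℕ, Odd K → 5 ≤ K →
      2 ≤ l K ∧ OR (3 * (3 * c (K + 1) + c K) * 2 ^ (l K - 2)) ∧
      (c K = 0 ∨ OR (3 * c K * 2 ^ (l K - 2))) ∧
      (9 ≤ K → OR (3 * c K * 2 ^ (l K - 2))) := by
  intro K
  induction K using Nat.strong_induction_on with
  | _ K IH =>
  intro hK h5
  obtain ⟨a, m, ha1, hmodd, hm1, hKeq, hmlt, hlK⟩ :
      ∃ a m, 1 ≤ a ∧ Odd m ∧ 1 ≤ m ∧ K = 2 ^ a * m + 1 ∧ m < K ∧ l K = a + l m := by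
    obtain ⟨x1, x2, x3, x4, x5⟩ := decomp hK h5
    exact ⟨_, _, x1, x2, x3, x4, x5, hlrec K hK (by omega)⟩
  have hmcase : m = 1 ∨ m = 3 ∨ 5 ≤ m := by
    have := Nat.odd_iff.mp hmodd; omega
  rcases hmcase with rfl | rfl | hm5
  · -- m = 1 : K = 2^a + 1
    have ha2 : 2 ≤ a := by
      by_contra hcon
      push_neg at hcon
      interval_cases a <;> simp_all <;> omega
    obtain ⟨b, rfl⟩ : ∃ b, a = b + 2 := ⟨a - 2, by omega⟩
    rw [hl1] at hlK
    have hlk2 : l K - 2 = b := by omega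
    have EA := fA c heven hodd (b + 2) 1 (le_refl 1)
    have EB := fB c heven hodd (b + 1) 1 (le_refl 1)
    rw [show b + 1 + 1 = b + 2 from by omega] at EB
    rw [show (2:ℕ) ^ (b + 2) * 1 + 2 = K + 1 from by omega, ← hKeq] at EB
    rw [← hKeq] at EA
    rw [show (1:ℕ) + 1 = 2 from rfl] at EA EB
    rw [h1, hc2] at EA EB
    have EQ : 3 * (3 * c K * 2 ^ (l K - 2)) = (((2:ℤ) ^ b - (-1) ^ b : ℤ) : ℚ) := by
      rw [hlk2]; push_cast; linear_combination (3/4 : ℚ) * EA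
    have EQB : 3 * (3 * (3 * c (K + 1) + c K) * 2 ^ (l K - 2))
        = (((2:ℤ) ^ (b + 2) + 5 * (-1) ^ b : ℤ) : ℚ) := by
      rw [hlk2]; push_cast; linear_combination (3/4 : ℚ) * EB
    have hYK : OR (3 * (3 * c (K + 1) + c K) * 2 ^ (l K - 2)) := by
      refine OR.of_three_mul ⟨(2:ℤ) ^ (b + 2) + 5 * (-1) ^ b, 1, ?_, odd_one, ?_⟩
      · exact Even.add_odd ⟨2 ^ (b + 1), by ring⟩ ((by decide : Odd (5:ℤ)).mul
          ((by decide : Odd (-1:ℤ)).pow))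
      · rw [Int.cast_one, mul_one]; exact EQB
    rcases Nat.eq_zero_or_pos b with rfl | hb1
    · -- b = 0 : K = 5, c K = 0
      have hcK : c K = 0 := by
        norm_num at EQ; linarith
      exact ⟨by omega, hYK, Or.inl hcK, fun h9 => by
        rw [hKeq] at h9; norm_num at h9⟩
    · have hXK : OR (3 * c K * 2 ^ (l K - 2)) := by
        refine OR.of_three_mul ⟨(2:ℤ) ^ b - (-1) ^ b, 1, ?_, odd_one, ?_⟩
        · refine Even.sub_odd ?_ ((by decide : Odd (-1:ℤ)).pow)
          exact ⟨2 ^ (b - 1), by rw [← two_mul, ← pow_succ']; congr 1; omega⟩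
        · rw [Int.cast_one, mul_one]; exact EQ
      exact ⟨by omega, hYK, Or.inr hXK, fun _ => hXK⟩
  · -- m = 3 : K = 3 * 2^a + 1
    obtain ⟨b, rfl⟩ : ∃ b, a = b + 1 := ⟨a - 1, by omega⟩
    rw [hl3] at hlK
    have hlk2 : l K - 2 = b := by omega
    have EA := fA c heven hodd (b + 1) 3 (by norm_num)
    have EB := fB c heven hodd b 3 (by norm_num)
    rw [show (2:ℕ) ^ (b + 1) * 3 + 2 = K + 1 from by omega, ← hKeq] at EB
    rw [← hKeq] at EA
    rw [show (3:ℕ) + 1 = 4 from rfl] at EA EB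
    rw [hc3, hc4] at EA EB
    have EQ : 3 * (3 * c K * 2 ^ (l K - 2)) = ((-(2:ℤ) ^ b + (-1) ^ b : ℤ) : ℚ) := by
      rw [hlk2]; push_cast; linear_combination (3/2 : ℚ) * EA
    have EQB : 3 * (3 * (3 * c (K + 1) + c K) * 2 ^ (l K - 2))
        = ((-(2:ℤ) ^ (b + 2) - 5 * (-1) ^ b : ℤ) : ℚ) := by
      rw [hlk2]; push_cast; linear_combination (3/2 : ℚ) * EB
    have hYK : OR (3 * (3 * c (K + 1) + c K) * 2 ^ (l K - 2)) := by
      refine OR.of_three_mul ⟨-(2:ℤ) ^ (b + 2) - 5 * (-1) ^ b, 1, ?_, odd_one, ?_⟩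
      · exact Even.sub_odd (⟨-2 ^ (b + 1), by ring⟩ : Even (-(2:ℤ) ^ (b+2)))
          ((by decide : Odd (5:ℤ)).mul ((by decide : Odd (-1:ℤ)).pow))
      · rw [Int.cast_one, mul_one]; exact EQB
    rcases Nat.eq_zero_or_pos b with rfl | hb1
    · -- b = 0: K = 7, c K = 0
      have hcK : c K = 0 := by
        norm_num at EQ; linarith
      exact ⟨by omega, hYK, Or.inl hcK, fun h9 => by
        rw [hKeq] at h9; norm_num at h9⟩
    · have hXK : OR (3 * c K * 2 ^ (l K - 2)) := by
        refine OR.of_three_mul ⟨-(2:ℤ) ^ b + (-1) ^ b, 1, ?_, odd_one, ?_⟩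
        · refine Even.add_odd (Even.neg ?_) ((by decide : Odd (-1:ℤ)).pow)
          exact ⟨2 ^ (b - 1), by rw [← two_mul, ← pow_succ']; congr 1; omega⟩
        · rw [Int.cast_one, mul_one]; exact EQ
      exact ⟨by omega, hYK, Or.inr hXK, fun _ => hXK⟩
  · -- m ≥ 5
    obtain ⟨hs2, hYm, hXm, -⟩ := IH m hmlt hmodd hm5
    obtain ⟨b, rfl⟩ : ∃ b, a = b + 1 := ⟨a - 1, by omega⟩
    have hlk2 : l K - 2 = (b + 1) + (l m - 2) := by omega
    have hpow : (2:ℚ) ^ (l K - 2) = 2 ^ (b + 1) * 2 ^ (l m - 2) := by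
      rw [hlk2, pow_add]
    have EA := fA c heven hodd (b + 1) m hm1
    have EB := fB c heven hodd b m hm1
    rw [show (2:ℕ) ^ (b + 1) * m + 2 = K + 1 from by omega, ← hKeq] at EB
    rw [← hKeq] at EA
    have EQ : 3 * (3 * c K * 2 ^ (l K - 2))
        = ((-(2:ℤ) ^ (b + 1) : ℤ) : ℚ) * (3 * c m * 2 ^ (l m - 2))
          + ((((-1):ℤ) ^ (b + 1) : ℤ) : ℚ) * (3 * (3 * c (m + 1) + c m) * 2 ^ (l m - 2)) := by
      rw [hpow]; push_cast; linear_combination (3 * (2:ℚ) ^ (l m - 2)) * EA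
    have EQB : 3 * (3 * (3 * c (K + 1) + c K) * 2 ^ (l K - 2))
        = ((-(2:ℤ) ^ (b + 3) : ℤ) : ℚ) * (3 * c m * 2 ^ (l m - 2))
          + ((-5 * ((-1):ℤ) ^ (b + 1) : ℤ) : ℚ) * (3 * (3 * c (m + 1) + c m) * 2 ^ (l m - 2)) := by
      rw [hpow]; push_cast; linear_combination (3 * (2:ℚ) ^ (l m - 2)) * EB
    have hXm' : (3 * c m * 2 ^ (l m - 2)) = 0 ∨ OR (3 * c m * 2 ^ (l m - 2)) := by
      rcases hXm with h | h
      · left; rw [h]; ring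
      · right; exact h
    have hXK : OR (3 * c K * 2 ^ (l K - 2)) := by
      refine OR.of_three_mul ?_
      rw [EQ]
      exact OR.lincomb (Even.neg ⟨2 ^ b, by ring⟩) ((by decide : Odd (-1:ℤ)).pow) hXm' hYm
    have hYK : OR (3 * (3 * c (K + 1) + c K) * 2 ^ (l K - 2)) := by
      refine OR.of_three_mul ?_
      rw [EQB]
      exact OR.lincomb (Even.neg ⟨2 ^ (b + 2), by ring⟩)
        ((by decide : Odd (-5:ℤ)).mul ((by decide : Odd (-1:ℤ)).pow)) hXm' hYm
    exact ⟨by omega, hYK, Or.inr hXK, fun _ => hXK⟩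

/-- Let `c : ℕ → ℚ` be the Thue–Morse Fourier coefficient sequence
(`c(0)=1`, `c(1)=−1/3`, `c(2n)=c(n)` and `c(2n+1)=−(c(n)+c(n+1))/2` for `n ≥ 1`), and
let `l` be defined by `l(1)=0` and `l(K) = v₂(K−1) + l((K−1)/2^{v₂(K−1)})` for odd
`K ≥ 3`. Then for every odd `K ≥ 5`, either `c(K) = 0` or `v₂(c(K)) ≥ 2 − l(K)`;
moreover, for every odd `K ≥ 9`, `c(K) ≠ 0` and `v₂(c(K)) = 2 − l(K)`. -/
theorem valuation_of_thue_morse_fourier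
    (c : ℕ → ℚ) (h0 : c 0 = 1) (h1 : c 1 = -1/3)
    (heven : ∀ n : ℕ, 1 ≤ n → c (2 * n) = c n)
    (hodd : ∀ n : ℕ, 1 ≤ n → c (2 * n + 1) = -(c n + c (n + 1)) / 2)
    (l : ℕ → ℕ) (hl1 : l 1 = 0)
    (hlrec : ∀ K : ℕ, Odd K → 3 ≤ K →
      l K = padicValNat 2 (K - 1) + l ((K - 1) / 2 ^ padicValNat 2 (K - 1))) :
    (∀ K : ℕ, Odd K → 5 ≤ K → c K = 0 ∨ 2 - (l K : ℤ) ≤ padicValRat 2 (c K)) ∧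
    (∀ K : ℕ, Odd K → 9 ≤ K → c K ≠ 0 ∧ padicValRat 2 (c K) = 2 - (l K : ℤ)) := by
  have hc2 : c 2 = -1/3 := by
    have := heven 1 (le_refl 1); rw [show 2 * 1 = 2 from rfl] at this; rw [this, h1]
  have hc3 : c 3 = 1/3 := by
    have := hodd 1 (le_refl 1)
    rw [show 2 * 1 + 1 = 3 from rfl, show (1:ℕ) + 1 = 2 from rfl] at this
    rw [this, h1, hc2]; norm_num
  have hc4 : c 4 = -1/3 := by
    have := heven 2 (by norm_num); rw [show 2 * 2 = 4 from rfl] at this; rw [this, hc2]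
  have hl3 : l 3 = 1 := by
    have := hlrec 3 ⟨1, by norm_num⟩ (le_refl 3)
    rw [show (3:ℕ) - 1 = 2 from rfl, padicValNat.self (by norm_num)] at this
    rw [this, show (2:ℕ) / 2 ^ 1 = 1 from rfl, hl1]
  have hkey := key c h1 hc2 hc3 hc4 heven hodd l hl1 hl3 hlrec
  constructor
  · intro K hK h5
    obtain ⟨hl2, -, hX, -⟩ := hkey K hK h5
    rcases hX with h | h
    · exact Or.inl h
    · obtain ⟨hne, hval⟩ := OR.val_eq h
      right; rw [hval]; omega
  · intro K hK h9
    obtain ⟨hl2, -, -, hX⟩ := hkey K hK (by omega)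
    obtain ⟨hne, hval⟩ := OR.val_eq (hX h9)
    exact ⟨hne, by rw [hval]; omega⟩
end

section
/- Let (a_n)_{n≥1} be an increasing sequence of positive integers with a_n | a_{n+1} and ρ := Σ_{n=1}^{∞} 1/a_n ≤ 1/4. Define sets A_n ⊆ ℕ (for n ∈ ℕ, including 0) recursively: A_0 = {k·a_1 : k ∈ ℕ}; for n > 0, if n ∈ A_m for some m < n then A_n := A_m (this is well defined: any two distinct sets among A_0,…,A_{n−1} are disjoint), and otherwise A_n := {n + k·a_{n+1} : k ∈ ℕ}. Define z : ℕ → ℤ by z(n) = μ(min A_n). Then liminf_{N→∞} (1/N) Σ_{k=1}^{N} z(k)·μ(k) ≥ 6/π² − 2ρ, and 6/π² − 2ρ > 0. -/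
open ArithmeticFunction Finset Filter
open scoped ArithmeticFunction.Moebius ArithmeticFunction.zeta

lemma sq_dvd_of_sq_mul_sq {d b A0 : ℕ} (hd : d ≠ 0) (hb : b ≠ 0) (hA : Squarefree A0)
    (h : d ^ 2 ∣ b ^ 2 * A0) : d ∣ b := by
  have hA0 : A0 ≠ 0 := hA.ne_zero
  rw [← Nat.factorization_le_iff_dvd hd hb]
  intro p
  have h2 : (d^2).factorization ≤ (b^2*A0).factorization :=
    (Nat.factorization_le_iff_dvd (pow_ne_zero _ hd) (by positivity)).2 h
  have := h2 p
  rw [Nat.factorization_pow, Nat.factorization_mul (pow_ne_zero _ hb) hA0,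
    Nat.factorization_pow] at this
  have hA1 : A0.factorization p ≤ 1 := (Nat.squarefree_iff_factorization_le_one hA0).1 hA p
  simp only [Finsupp.coe_smul, Finsupp.coe_add, Pi.smul_apply, Pi.add_apply, smul_eq_mul] at this
  omega

lemma moebius_sq_eq_sum {N n : ℕ} (hn : 1 ≤ n) (hnN : n ≤ N) :
    ∑ d ∈ (Finset.Icc 1 N.sqrt).filter (fun d => d ^ 2 ∣ n), (μ d : ℤ) = (μ n : ℤ) ^ 2 := by
  obtain ⟨A0, b, hab, hsf⟩ := Nat.sq_mul_squarefree n
  have hn0 : n ≠ 0 := by omega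
  have hb : b ≠ 0 := by rintro rfl; simp at hab; omega
  have hA0 : A0 ≠ 0 := hsf.ne_zero
  have hset : (Finset.Icc 1 N.sqrt).filter (fun d => d ^ 2 ∣ n) = b.divisors := by
    ext d
    simp only [Finset.mem_filter, Finset.mem_Icc, Nat.mem_divisors]
    constructor
    · rintro ⟨⟨h1, h2⟩, h3⟩
      exact ⟨sq_dvd_of_sq_mul_sq (by omega) hb hsf (hab ▸ h3), hb⟩
    · rintro ⟨hdb, -⟩
      have hd0 : d ≠ 0 := by rintro rfl; exact hb (Nat.eq_zero_of_zero_dvd hdb)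
      have hdsq : d ^ 2 ∣ n := hab ▸ (dvd_mul_of_dvd_left (pow_dvd_pow_of_dvd hdb 2) _)
      have hdd : d * d ≤ N := by
        calc d * d = d ^ 2 := (sq d).symm
        _ ≤ n := Nat.le_of_dvd (by omega) hdsq
        _ ≤ N := hnN
      exact ⟨⟨by omega, Nat.le_sqrt.2 hdd⟩, hdsq⟩
  rw [hset]
  have h1 : ∑ d ∈ b.divisors, (μ d : ℤ) = ((↑μ * ↑ζ : ArithmeticFunction ℤ)) b := by
    rw [coe_mul_zeta_apply]
  rw [h1, moebius_mul_coe_zeta, one_apply, moebius_sq]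
  have hbsq : b = 1 ↔ Squarefree n := by
    constructor
    · rintro rfl; simpa [← hab] using hsf
    · intro hsq
      have hbb : b * b ∣ n := by rw [← hab, sq]; exact Dvd.intro A0 rfl
      exact Nat.isUnit_iff.1 (hsq b hbb)
  simp [hbsq]

lemma Qsum (N : ℕ) :
    ∑ k ∈ Finset.Icc 1 N, (μ k : ℤ) ^ 2
      = ∑ d ∈ Finset.Icc 1 N.sqrt, (μ d : ℤ) * (N / d ^ 2 : ℕ) := by
  have h1 : ∀ k ∈ Finset.Icc 1 N, (μ k : ℤ) ^ 2
      = ∑ d ∈ Finset.Icc 1 N.sqrt, if d ^ 2 ∣ k then (μ d : ℤ) else 0 := by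
    intro k hk
    rw [Finset.mem_Icc] at hk
    rw [← Finset.sum_filter, moebius_sq_eq_sum hk.1 hk.2]
  rw [Finset.sum_congr rfl h1, Finset.sum_comm]
  refine Finset.sum_congr rfl fun d hd => ?_
  have he : Finset.Icc 1 N = Finset.Ioc 0 N := by ext x; simp; omega
  rw [← Finset.sum_filter, Finset.sum_const, he, Nat.Ioc_filter_dvd_card_eq_div]
  simp [mul_comm]

lemma summable_moebius_div_sq : Summable (fun d : ℕ => (μ d : ℝ) / d ^ 2) := by
  have hs : Summable (fun d : ℕ => 1 / (d : ℝ) ^ 2) :=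
    (Real.summable_one_div_nat_pow).2 one_lt_two
  refine hs.of_norm_bounded fun d => ?_
  rcases eq_or_ne d 0 with rfl | hd
  · simp
  · rw [norm_div, norm_pow, Real.norm_natCast]
    have h1 : ‖((μ d : ℤ) : ℝ)‖ ≤ 1 := by
      rw [Real.norm_eq_abs, ← Int.cast_abs]
      exact_mod_cast abs_moebius_le_one (n := d)
    have h2 : (0:ℝ) < (d:ℝ) ^ 2 := by positivity
    rw [div_le_div_iff₀ h2 h2]
    nlinarith [norm_nonneg ((μ d : ℤ) : ℝ)]

lemma tsum_moebius_div_sq : ∑' d : ℕ, (μ d : ℝ) / d ^ 2 = 6 / Real.pi ^ 2 := by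
  have hre : (1 : ℝ) < (2 : ℂ).re := by norm_num
  have hζ : LSeries (fun n => ((ζ n : ℕ) : ℂ)) 2 = riemannZeta 2 := LSeries_zeta_eq_riemannZeta hre
  have hmul := LSeries_zeta_mul_Lseries_moebius hre
  have hterm : ∀ n : ℕ, LSeries.term (fun n => ((μ n : ℤ) : ℂ)) 2 n
      = (((μ n : ℝ) / n ^ 2 : ℝ) : ℂ) := by
    intro n
    rcases eq_or_ne n 0 with rfl | hn
    · simp [LSeries.term]
    · rw [LSeries.term_of_ne_zero hn]
      have : (n : ℂ) ^ (2 : ℂ) = ((n : ℂ)) ^ (2 : ℕ) := by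
        rw [show (2:ℂ) = ((2:ℕ):ℂ) by norm_num, Complex.cpow_natCast]
      rw [this]
      push_cast
      ring
  have hμL : LSeries (fun n => ((μ n : ℤ) : ℂ)) 2
      = ((∑' d : ℕ, (μ d : ℝ) / d ^ 2 : ℝ) : ℂ) := by
    rw [LSeries]
    rw [show (fun n => LSeries.term (fun n => ((μ n : ℤ) : ℂ)) 2 n)
        = fun n => (((μ n : ℝ) / n ^ 2 : ℝ) : ℂ) from funext hterm]
    exact (Complex.ofRealCLM.map_tsum summable_moebius_div_sq).symm
  rw [hζ, riemannZeta_two, hμL] at hmul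
  have hπ : (Real.pi : ℂ) ^ 2 / 6 ≠ 0 := by
    simp [pow_eq_zero_iff, Complex.ofReal_eq_zero, Real.pi_ne_zero]
  have hπ2 : (Real.pi : ℂ) ^ 2 ≠ 0 := by
    simp [pow_eq_zero_iff, Complex.ofReal_eq_zero, Real.pi_ne_zero]
  have : ((∑' d : ℕ, (μ d : ℝ) / d ^ 2 : ℝ) : ℂ) = 6 / (Real.pi : ℂ) ^ 2 := by
    rw [eq_div_iff hπ2]
    linear_combination 6 * hmul
  have h2 : ((∑' d : ℕ, (μ d : ℝ) / d ^ 2 : ℝ) : ℂ) = (((6 / Real.pi ^ 2 : ℝ)) : ℂ) := by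
    rw [this]; push_cast; ring
  exact_mod_cast h2


noncomputable def Tsum (s : ℕ) : ℝ := ∑ d ∈ Finset.Icc 1 s, (μ d : ℝ) / d ^ 2

lemma tendsto_sqrt_atTop : Filter.Tendsto Nat.sqrt atTop atTop :=
  Filter.tendsto_atTop_atTop.2 fun b => ⟨b * b, fun n hn => Nat.le_sqrt.2 hn⟩

lemma tendsto_Tsum : Filter.Tendsto Tsum atTop (nhds (6 / Real.pi ^ 2)) := by
  have h1 : Filter.Tendsto (fun n => ∑ d ∈ Finset.range n, (μ d : ℝ) / d ^ 2) atTop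
      (nhds (6 / Real.pi ^ 2)) := by
    rw [← tsum_moebius_div_sq]
    exact summable_moebius_div_sq.hasSum.tendsto_sum_nat
  have h2 := h1.comp (Filter.tendsto_add_atTop_nat 1)
  refine h2.congr fun s => ?_
  have hins : Finset.range (s + 1) = insert 0 (Finset.Icc 1 s) := by
    ext x; simp only [Finset.mem_range, Finset.mem_insert, Finset.mem_Icc]; omega
  rw [Function.comp_apply, hins, Finset.sum_insert (by simp)]
  simp [Tsum]

lemma err_bound {N : ℕ} (hN : 1 ≤ N) :
    ‖(N : ℝ)⁻¹ * ∑ k ∈ Finset.Icc 1 N, (μ k : ℝ) ^ 2 - Tsum N.sqrt‖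
      ≤ (N.sqrt : ℝ) / N := by
  have hQ : ∑ k ∈ Finset.Icc 1 N, (μ k : ℝ) ^ 2
      = ∑ d ∈ Finset.Icc 1 N.sqrt, (μ d : ℝ) * (N / d ^ 2 : ℕ) := by
    have hQ' := congrArg (fun z : ℤ => (z : ℝ)) (Qsum N)
    push_cast at hQ'
    exact hQ'
  have hNR : (0:ℝ) < N := by exact_mod_cast hN
  rw [hQ, Tsum, Finset.mul_sum, ← Finset.sum_sub_distrib]
  refine (norm_sum_le _ _).trans ?_
  have hb : ∀ d ∈ Finset.Icc 1 N.sqrt,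
      ‖(N:ℝ)⁻¹ * ((μ d : ℝ) * (N / d ^ 2 : ℕ)) - (μ d : ℝ) / d ^ 2‖ ≤ 1 / N := by
    intro d hd
    rw [Finset.mem_Icc] at hd
    have hdpos : (0:ℝ) < (d:ℝ) := by exact_mod_cast hd.1
    have hd2 : (0:ℝ) < (d:ℝ) ^ 2 := by positivity
    set D : ℕ := d ^ 2 with hD
    set m : ℕ := N / D with hm
    have hDpos : 0 < D := hD ▸ pow_pos hd.1 2
    have hmod : D * m + N % D = N := Nat.div_add_mod N D
    have hr : N % D < D := Nat.mod_lt _ hDpos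
    have hc1n : D * m ≤ N := by omega
    have hc2n : N ≤ D * m + D := by omega
    rw [hD] at hc1n hc2n
    have hc1 : ((d:ℝ)^2) * m ≤ N := by exact_mod_cast hc1n
    have hc2 : (N:ℝ) ≤ (d:ℝ)^2 * m + (d:ℝ)^2 := by exact_mod_cast hc2n
    have hA : (N:ℝ)⁻¹ * (m:ℝ) ≤ 1 / (d:ℝ)^2 := by
      rw [inv_mul_eq_div, div_le_div_iff₀ hNR hd2]
      nlinarith
    have hB : 1 / (d:ℝ)^2 ≤ (N:ℝ)⁻¹ * (m:ℝ) + 1 / N := by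
      rw [inv_mul_eq_div, ← add_div, div_le_div_iff₀ hd2 hNR]
      nlinarith
    have hμ : ‖((μ d : ℤ) : ℝ)‖ ≤ 1 := by
      rw [Real.norm_eq_abs, ← Int.cast_abs]
      exact_mod_cast abs_moebius_le_one (n := d)
    have hrw : (N:ℝ)⁻¹ * ((μ d : ℝ) * (m:ℝ)) - (μ d : ℝ) / (d:ℝ)^2
        = (μ d : ℝ) * ((N:ℝ)⁻¹ * (m:ℝ) - 1 / (d:ℝ)^2) := by ring
    rw [hrw, norm_mul]
    have h3 : ‖(N:ℝ)⁻¹ * (m:ℝ) - 1 / (d:ℝ)^2‖ ≤ 1 / N := by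
      rw [Real.norm_eq_abs, abs_le]
      constructor <;> linarith
    calc ‖((μ d : ℤ) : ℝ)‖ * ‖(N:ℝ)⁻¹ * (m:ℝ) - 1 / (d:ℝ)^2‖
        ≤ 1 * (1 / N) := by
          apply mul_le_mul hμ h3 (norm_nonneg _) zero_le_one
      _ = 1 / N := one_mul _
  refine (Finset.sum_le_sum hb).trans ?_
  have hc : (Finset.Icc 1 N.sqrt).card = N.sqrt := by rw [Nat.card_Icc]; omega
  rw [Finset.sum_const, hc, nsmul_eq_mul, mul_one_div]

lemma tendsto_Qdensity :
    Filter.Tendsto (fun N : ℕ => (N : ℝ)⁻¹ * ∑ k ∈ Finset.Icc 1 N, (μ k : ℝ) ^ 2)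
      atTop (nhds (6 / Real.pi ^ 2)) := by
  have hdiff : Filter.Tendsto
      (fun N : ℕ => (N : ℝ)⁻¹ * ∑ k ∈ Finset.Icc 1 N, (μ k : ℝ) ^ 2 - Tsum N.sqrt)
      atTop (nhds 0) := by
    apply squeeze_zero_norm' (a := fun N : ℕ => (N.sqrt : ℝ) / N)
    · filter_upwards [eventually_ge_atTop 1] with N hN using err_bound hN
    · have hinv : Filter.Tendsto (fun N : ℕ => ((N.sqrt : ℝ))⁻¹) atTop (nhds 0) :=
        tendsto_inv_atTop_zero.comp (tendsto_natCast_atTop_atTop.comp tendsto_sqrt_atTop)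
      apply tendsto_of_tendsto_of_tendsto_of_le_of_le' tendsto_const_nhds hinv
      · filter_upwards with N; positivity
      · filter_upwards [eventually_ge_atTop 1] with N hN
        have h0 : 0 < N.sqrt := Nat.sqrt_pos.2 hN
        have h0R : (0:ℝ) < (N.sqrt : ℝ) := by exact_mod_cast h0
        have hNR : (0:ℝ) < (N:ℝ) := by exact_mod_cast hN
        rw [div_le_iff₀ hNR, inv_mul_eq_div, le_div_iff₀ h0R]
        have h := Nat.sqrt_le' N
        rw [pow_two] at h
        exact_mod_cast h
  have := hdiff.add (tendsto_Tsum.comp tendsto_sqrt_atTop)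
  simpa using this

/-- Let `(a_n)_{n≥1}` be increasing positive integers with `a_n ∣ a_{n+1}`
and `ρ = Σ_{n≥1} 1/a_n ≤ 1/4`. Let `A : ℕ → Set ℕ` be the sets from the non-regular
Toeplitz construction: `A 0 = {k·a₁}`; for `n > 0`, `A n = A m` whenever `m < n` and
`n ∈ A m`, and `A n = {n + k·a_{n+1}}` when `n ∉ A m` for all `m < n`. With
`z(n) = μ(min A_n)`, we have
`liminf_N (1/N) Σ_{k=1}^N z(k) μ(k) ≥ 6/π² − 2ρ > 0`. -/
theorem nonregular_toeplitz_not_moebius_orthogonal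
    (a : ℕ → ℕ)
    (hpos : ∀ n : ℕ, 1 ≤ n → 0 < a n)
    (hmono : ∀ n : ℕ, 1 ≤ n → a n < a (n + 1))
    (hdvd : ∀ n : ℕ, 1 ≤ n → a n ∣ a (n + 1))
    (ρ : ℝ) (hρ : ρ = ∑' n : ℕ, (1 : ℝ) / a (n + 1)) (hρ4 : ρ ≤ 1 / 4)
    (A : ℕ → Set ℕ)
    (hA0 : A 0 = {j | ∃ k : ℕ, j = k * a 1})
    (hAeq : ∀ n : ℕ, 0 < n → ∀ m : ℕ, m < n → n ∈ A m → A n = A m)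
    (hAnew : ∀ n : ℕ, 0 < n → (∀ m : ℕ, m < n → n ∉ A m) →
      A n = {j | ∃ k : ℕ, j = n + k * a (n + 1)}) :
    6 / Real.pi ^ 2 - 2 * ρ ≤
      liminf
        (fun N : ℕ => (N : ℝ)⁻¹ *
          ∑ k ∈ Finset.Icc 1 N,
            (ArithmeticFunction.moebius (sInf (A k)) : ℝ) *
              (ArithmeticFunction.moebius k : ℝ))
        atTop ∧
    0 < 6 / Real.pi ^ 2 - 2 * ρ := by
  classical
  have ha1 : 0 < a 1 := hpos 1 le_rfl
  -- growth of a, summability, ρ ≥ 0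
  have hgrow : ∀ m : ℕ, 2 ^ m ≤ a (m + 1) := by
    intro m
    induction m with
    | zero => simpa using Nat.one_le_iff_ne_zero.2 ha1.ne'
    | succ m ih =>
      have h1 : 0 < a (m + 1) := hpos _ (by omega)
      obtain ⟨c, hc⟩ := hdvd (m + 1) (by omega)
      have hlt := hmono (m + 1) (by omega)
      have hc2 : 2 ≤ c := by
        by_contra hcon
        interval_cases c <;> omega
      calc 2 ^ (m + 1) = 2 ^ m * 2 := by ring
        _ ≤ a (m + 1) * c := Nat.mul_le_mul ih hc2
        _ = a (m + 1 + 1) := hc.symm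
  have hsumm : Summable (fun m : ℕ => (1 : ℝ) / a (m + 1)) := by
    have hgeo : Summable (fun m : ℕ => ((1 : ℝ) / 2) ^ m) :=
      summable_geometric_of_lt_one (by norm_num) (by norm_num)
    refine Summable.of_nonneg_of_le (fun m => by positivity) (fun m => ?_) hgeo
    have h2 : (2 : ℝ) ^ m ≤ (a (m + 1) : ℝ) := by exact_mod_cast hgrow m
    have hp : (0 : ℝ) < 2 ^ m := by positivity
    calc (1 : ℝ) / a (m + 1) ≤ 1 / 2 ^ m := one_div_le_one_div_of_le hp h2
      _ = ((1 : ℝ) / 2) ^ m := by rw [div_pow, one_pow]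
  have hρ0 : 0 ≤ ρ := hρ ▸ tsum_nonneg (fun m => by positivity)
  -- form of the sets with "new" initials
  have hform : ∀ m : ℕ, (∀ m' : ℕ, m' < m → m ∉ A m') →
      A m = {j | ∃ t : ℕ, j = m + t * a (m + 1)} := by
    intro m hm
    rcases Nat.eq_zero_or_pos m with rfl | hm0
    · rw [hA0]; ext j; simp
    · exact hAnew m hm0 hm
  have hInf : ∀ m : ℕ, (∀ m' : ℕ, m' < m → m ∉ A m') → sInf (A m) = m := by
    intro m hm
    have hAm := hform m hm
    have hmem : m ∈ A m := by rw [hAm]; exact ⟨0, by simp⟩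
    have hlow : ∀ j ∈ A m, m ≤ j := by
      rw [hAm]; rintro j ⟨t, rfl⟩; omega
    exact le_antisymm (Nat.sInf_le hmem) (hlow _ (Nat.sInf_mem ⟨m, hmem⟩))
  have habs : ∀ n : ℕ, |((μ n : ℤ) : ℝ)| ≤ 1 := by
    intro n
    rw [← Int.cast_abs]
    exact_mod_cast abs_moebius_le_one (n := n)
  -- main per-N inequality
  have hmain : ∀ N : ℕ, 1 ≤ N →
      (N : ℝ)⁻¹ * (∑ k ∈ Finset.Icc 1 N, (μ k : ℝ) ^ 2) - 2 * ρ ≤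
      (N : ℝ)⁻¹ * ∑ k ∈ Finset.Icc 1 N, (μ (sInf (A k)) : ℝ) * (μ k : ℝ) := by
    intro N hN
    have hNR : (0 : ℝ) < N := by exact_mod_cast hN
    set P : ℕ → Prop := fun k => ∃ m, m < k ∧ k ∈ A m with hPdef
    -- pointwise bound
    have hpt : ∀ k ∈ Finset.Icc 1 N,
        (μ k : ℝ) ^ 2 - 2 * (if P k then (1 : ℝ) else 0) ≤
          (μ (sInf (A k)) : ℝ) * (μ k : ℝ) := by
      intro k hk
      by_cases hPk : P k
      · rw [if_pos hPk]
        have h1 := habs (sInf (A k))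
        have h2 := habs k
        rw [abs_le] at h1 h2
        nlinarith [mul_nonneg (by linarith : (0:ℝ) ≤ 1 + ((μ (sInf (A k)) : ℤ) : ℝ))
            (by linarith : (0:ℝ) ≤ 1 + ((μ k : ℤ) : ℝ)),
          mul_nonneg (by linarith : (0:ℝ) ≤ 1 - ((μ (sInf (A k)) : ℤ) : ℝ))
            (by linarith : (0:ℝ) ≤ 1 - ((μ k : ℤ) : ℝ))]
      · rw [if_neg hPk]
        have hnew : ∀ m' : ℕ, m' < k → k ∉ A m' := by
          intro m' hm' hmem
          exact hPk ⟨m', hm', hmem⟩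
        rw [hInf k hnew, pow_two]
        simp
    -- cardinality bound for the "old" points
    have hcard : ((Finset.Icc 1 N).filter P).card ≤ ∑ m ∈ Finset.range N, N / a (m + 1) := by
      have hsub : (Finset.Icc 1 N).filter P ⊆ (Finset.range N).biUnion
          (fun m => (Finset.Icc 1 (N / a (m + 1))).image (fun t => m + t * a (m + 1))) := by
        intro k hk
        rw [Finset.mem_filter, Finset.mem_Icc] at hk
        obtain ⟨⟨hk1, hkN⟩, hex⟩ := hk
        have hspec := Nat.find_spec hex
        set m₀ := Nat.find hex with hm₀
        have hm₀new : ∀ m' : ℕ, m' < m₀ → m₀ ∉ A m' := by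
          intro m' hm' hmem
          have h0 : 0 < m₀ := by omega
          have hAe := hAeq m₀ h0 m' hm' hmem
          exact Nat.find_min hex hm' ⟨by omega, by rw [← hAe]; exact hspec.2⟩
        have hAf := hform m₀ hm₀new
        have hk2 := hspec.2
        rw [hAf] at hk2
        obtain ⟨t, ht⟩ := hk2
        have hapos : 0 < a (m₀ + 1) := hpos _ (by omega)
        have ht1 : 1 ≤ t := by
          rcases Nat.eq_zero_or_pos t with rfl | h
          · simp at ht; omega
          · exact h
        have hta : t * a (m₀ + 1) ≤ N := by omega
        have htle : t ≤ N / a (m₀ + 1) := (Nat.le_div_iff_mul_le hapos).2 hta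
        rw [Finset.mem_biUnion]
        exact ⟨m₀, Finset.mem_range.2 (by omega),
          Finset.mem_image.2 ⟨t, Finset.mem_Icc.2 ⟨ht1, htle⟩, ht.symm⟩⟩
      calc ((Finset.Icc 1 N).filter P).card
          ≤ _ := Finset.card_le_card hsub
        _ ≤ ∑ m ∈ Finset.range N,
              ((Finset.Icc 1 (N / a (m + 1))).image (fun t => m + t * a (m + 1))).card :=
            Finset.card_biUnion_le
        _ ≤ ∑ m ∈ Finset.range N, N / a (m + 1) := by
            refine Finset.sum_le_sum fun m _ => ?_
            refine Finset.card_image_le.trans ?_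
            rw [Nat.card_Icc, Nat.add_sub_cancel]
    have hcardR : (((Finset.Icc 1 N).filter P).card : ℝ) ≤ N * ρ := by
      calc (((Finset.Icc 1 N).filter P).card : ℝ)
          ≤ ((∑ m ∈ Finset.range N, N / a (m + 1) : ℕ) : ℝ) := by exact_mod_cast hcard
        _ = ∑ m ∈ Finset.range N, ((N / a (m + 1) : ℕ) : ℝ) := by push_cast; ring
        _ ≤ ∑ m ∈ Finset.range N, (N : ℝ) / (a (m + 1) : ℝ) :=
            Finset.sum_le_sum fun m _ => Nat.cast_div_le
        _ = (N : ℝ) * ∑ m ∈ Finset.range N, (1 : ℝ) / (a (m + 1) : ℝ) := by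
            rw [Finset.mul_sum]
            exact Finset.sum_congr rfl fun m _ => by rw [mul_one_div]
        _ ≤ (N : ℝ) * ρ := by
            have hle : ∑ m ∈ Finset.range N, (1 : ℝ) / (a (m + 1) : ℝ) ≤ ρ :=
              hρ ▸ Summable.sum_le_tsum (Finset.range N) (fun m _ => by positivity) hsumm
            exact mul_le_mul_of_nonneg_left hle (le_of_lt hNR)
    -- combine
    have hsum1 : ∑ k ∈ Finset.Icc 1 N, ((μ k : ℝ) ^ 2 - 2 * (if P k then (1:ℝ) else 0))
        ≤ ∑ k ∈ Finset.Icc 1 N, (μ (sInf (A k)) : ℝ) * (μ k : ℝ) :=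
      Finset.sum_le_sum hpt
    rw [Finset.sum_sub_distrib, ← Finset.mul_sum, Finset.sum_boole] at hsum1
    have hstep : ∑ k ∈ Finset.Icc 1 N, (μ k : ℝ) ^ 2 - 2 * ((N : ℝ) * ρ)
        ≤ ∑ k ∈ Finset.Icc 1 N, (μ (sInf (A k)) : ℝ) * (μ k : ℝ) := by
      have := mul_le_mul_of_nonneg_left hcardR (by norm_num : (0:ℝ) ≤ 2)
      linarith
    have := mul_le_mul_of_nonneg_left hstep (le_of_lt (inv_pos.2 hNR))
    calc (N : ℝ)⁻¹ * (∑ k ∈ Finset.Icc 1 N, (μ k : ℝ) ^ 2) - 2 * ρ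
        = (N : ℝ)⁻¹ * ((∑ k ∈ Finset.Icc 1 N, (μ k : ℝ) ^ 2) - 2 * ((N:ℝ) * ρ)) := by
          field_simp
      _ ≤ _ := this
  -- positivity of the constant
  have hπlt : Real.pi ^ 2 < 12 := by
    have h1 := Real.pi_lt_d2
    have h2 := Real.pi_pos
    nlinarith
  have hπpos : (0 : ℝ) < Real.pi ^ 2 := by positivity
  have hconst : 0 < 6 / Real.pi ^ 2 - 2 * ρ := by
    have h6 : (1 : ℝ) / 2 < 6 / Real.pi ^ 2 := by
      rw [div_lt_div_iff₀ (by norm_num) hπpos]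
      nlinarith
    linarith
  refine ⟨?_, hconst⟩
  -- liminf bound
  have hTend : Tendsto
      (fun N : ℕ => (N : ℝ)⁻¹ * (∑ k ∈ Finset.Icc 1 N, (μ k : ℝ) ^ 2) - 2 * ρ)
      atTop (nhds (6 / Real.pi ^ 2 - 2 * ρ)) :=
    tendsto_Qdensity.sub_const _
  have hev : ∀ᶠ N : ℕ in atTop,
      (N : ℝ)⁻¹ * (∑ k ∈ Finset.Icc 1 N, (μ k : ℝ) ^ 2) - 2 * ρ ≤
      (N : ℝ)⁻¹ * ∑ k ∈ Finset.Icc 1 N, (μ (sInf (A k)) : ℝ) * (μ k : ℝ) := by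
    filter_upwards [eventually_ge_atTop 1] with N hN using hmain N hN
  have hbddL : Filter.IsBoundedUnder (· ≤ ·) atTop
      (fun N : ℕ => (N : ℝ)⁻¹ * ∑ k ∈ Finset.Icc 1 N, (μ (sInf (A k)) : ℝ) * (μ k : ℝ)) := by
    refine Filter.isBoundedUnder_of ⟨1, fun N => ?_⟩
    have hterm : ∀ k ∈ Finset.Icc 1 N, (μ (sInf (A k)) : ℝ) * (μ k : ℝ) ≤ 1 := by
      intro k _
      have h1 := habs (sInf (A k))
      have h2 := habs k
      rw [abs_le] at h1 h2
      nlinarith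
    have hsle : ∑ k ∈ Finset.Icc 1 N, (μ (sInf (A k)) : ℝ) * (μ k : ℝ) ≤ N := by
      calc ∑ k ∈ Finset.Icc 1 N, (μ (sInf (A k)) : ℝ) * (μ k : ℝ)
          ≤ ∑ k ∈ Finset.Icc 1 N, (1 : ℝ) := Finset.sum_le_sum hterm
        _ = ((Finset.Icc 1 N).card : ℝ) := by simp
        _ ≤ N := by rw [Nat.card_Icc]; exact_mod_cast Nat.le_refl _ |>.trans (by omega)
    rcases Nat.eq_zero_or_pos N with rfl | hN
    · simp
    · have hNR : (0 : ℝ) < N := by exact_mod_cast hN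
      calc (N : ℝ)⁻¹ * ∑ k ∈ Finset.Icc 1 N, (μ (sInf (A k)) : ℝ) * (μ k : ℝ)
          ≤ (N : ℝ)⁻¹ * N := by
            apply mul_le_mul_of_nonneg_left hsle (le_of_lt (inv_pos.2 hNR))
        _ = 1 := by field_simp
  have hcobdd := hbddL.isCoboundedUnder_ge
  have hbddg := hTend.isBoundedUnder_ge
  have hll := Filter.liminf_le_liminf hev hbddg hcobdd
  rwa [hTend.liminf_eq] at hll
end

section
/- Let (a_n)_{n≥1} be an increasing sequence of positive integers with a_n | a_{n+1} and ρ := Σ_{n=1}^{∞} 1/a_n ≤ 1/4. Define sets A_n ⊆ ℕ (for n ∈ ℕ, including 0) recursively: A_0 = {k·a_1 : k ∈ ℕ}; for n > 0, if n ∈ A_m for some m < n then A_n := A_m, and otherwise A_n := {n + k·a_{n+1} : k ∈ ℕ}. Call n an initial if n = min A_n. Then for every N ≥ 1, the number of k ∈ {1, …, N} that are not initials is strictly less than N·ρ. -/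
open Filter

/-- Key structural lemma: every `A n` contains `n` and equals `A i` for a "fresh"
index `i ≤ n` whose set is an explicit arithmetic progression starting at `i`. -/
lemma toeplitz_canon
    (a : ℕ → ℕ)
    (A : ℕ → Set ℕ)
    (hA0 : A 0 = {j | ∃ k : ℕ, j = k * a 1})
    (hAeq : ∀ n : ℕ, 0 < n → ∀ m : ℕ, m < n → n ∈ A m → A n = A m)
    (hAnew : ∀ n : ℕ, 0 < n → (∀ m : ℕ, m < n → n ∉ A m) →
      A n = {j | ∃ k : ℕ, j = n + k * a (n + 1)}) :
    ∀ n : ℕ, n ∈ A n ∧ ∃ i : ℕ, i ≤ n ∧ A n = A i ∧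
      A i = {j | ∃ k : ℕ, j = i + k * a (i + 1)} := by
  intro n
  induction n using Nat.strong_induction_on with
  | _ n ih =>
    rcases Nat.eq_zero_or_pos n with rfl | hn
    · have hform : A 0 = {j | ∃ k : ℕ, j = 0 + k * a (0 + 1)} := by
        rw [hA0]; ext j; simp
      exact ⟨by rw [hform]; exact ⟨0, by simp⟩, 0, le_refl 0, rfl, hform⟩
    · by_cases h : ∃ m : ℕ, m < n ∧ n ∈ A m
      · obtain ⟨m, hm, hnm⟩ := h
        have hAn : A n = A m := hAeq n hn m hm hnm
        obtain ⟨_, i, hi, hAm, hform⟩ := ih m hm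
        exact ⟨by rw [hAn]; exact hnm, i, le_trans hi (le_of_lt hm),
          by rw [hAn, hAm], hform⟩
      · push_neg at h
        have hAn : A n = {j | ∃ k : ℕ, j = n + k * a (n + 1)} :=
          hAnew n hn (fun m hm => h m hm)
        exact ⟨by rw [hAn]; exact ⟨0, by simp⟩, n, le_refl n, rfl, hAn⟩

/-- `sInf (A n)` is a canonical index: it is `≤ n`, `A n = A (sInf (A n))`, and
`A n` is the arithmetic progression starting at `sInf (A n)`. -/
lemma toeplitz_sInf
    (a : ℕ → ℕ)
    (A : ℕ → Set ℕ)
    (hA0 : A 0 = {j | ∃ k : ℕ, j = k * a 1})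
    (hAeq : ∀ n : ℕ, 0 < n → ∀ m : ℕ, m < n → n ∈ A m → A n = A m)
    (hAnew : ∀ n : ℕ, 0 < n → (∀ m : ℕ, m < n → n ∉ A m) →
      A n = {j | ∃ k : ℕ, j = n + k * a (n + 1)}) :
    ∀ n : ℕ, n ∈ A n ∧ sInf (A n) ≤ n ∧
      A n = {j | ∃ k : ℕ, j = sInf (A n) + k * a (sInf (A n) + 1)} := by
  intro n
  obtain ⟨hmem, i, hi, hAn, hform⟩ := toeplitz_canon a A hA0 hAeq hAnew n
  have hinf : sInf (A n) = i := by
    rw [hAn]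
    apply IsLeast.csInf_eq
    constructor
    · rw [hform]; exact ⟨0, by simp⟩
    · intro x hx
      rw [hform] at hx
      obtain ⟨k, rfl⟩ := hx
      exact Nat.le_add_right _ _
  refine ⟨hmem, ?_, ?_⟩
  · rw [hinf]; exact hi
  · rw [hinf, hAn]; exact hform

/-- With `(a_n)_{n≥1}` increasing positive integers, `a_n ∣ a_{n+1}`,
`ρ = Σ_{n≥1} 1/a_n ≤ 1/4`, and the sets `A : ℕ → Set ℕ` of the non-regular Toeplitz
construction (`A 0 = {k·a₁}`; for `n > 0`, `A n = A m` if `m < n` and `n ∈ A m`, else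
`A n = {n + k·a_{n+1}}`), call `n` an initial if `n = min A_n`. Then for every `N ≥ 1`
the number of non-initials in `{1, …, N}` is strictly less than `N·ρ`. -/
theorem count_non_initials_lt
    (a : ℕ → ℕ)
    (hpos : ∀ n : ℕ, 1 ≤ n → 0 < a n)
    (hmono : ∀ n : ℕ, 1 ≤ n → a n < a (n + 1))
    (hdvd : ∀ n : ℕ, 1 ≤ n → a n ∣ a (n + 1))
    (ρ : ℝ) (hρ : ρ = ∑' n : ℕ, (1 : ℝ) / a (n + 1)) (hρ4 : ρ ≤ 1 / 4)
    (A : ℕ → Set ℕ)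
    (hA0 : A 0 = {j | ∃ k : ℕ, j = k * a 1})
    (hAeq : ∀ n : ℕ, 0 < n → ∀ m : ℕ, m < n → n ∈ A m → A n = A m)
    (hAnew : ∀ n : ℕ, 0 < n → (∀ m : ℕ, m < n → n ∉ A m) →
      A n = {j | ∃ k : ℕ, j = n + k * a (n + 1)}) :
    ∀ N : ℕ, 1 ≤ N →
      ((((Finset.Icc 1 N).filter (fun k => k ≠ sInf (A k))).card : ℝ)) < N * ρ := by
  have hcanon := toeplitz_sInf a A hA0 hAeq hAnew
  -- positivity of each a (n+1)
  have hapos : ∀ n : ℕ, 0 < a (n + 1) := fun n => hpos (n + 1) (Nat.le_add_left 1 n)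
  -- geometric growth : a (n+1) ≥ 2^n
  have hgeom : ∀ n : ℕ, 2 ^ n ≤ a (n + 1) := by
    intro n
    induction n with
    | zero => simpa using Nat.succ_le_of_lt (hapos 0)
    | succ n ih =>
      have h1 : a (n + 1) ∣ a (n + 2) := hdvd (n + 1) (Nat.le_add_left 1 n)
      have h2 : a (n + 1) < a (n + 2) := hmono (n + 1) (Nat.le_add_left 1 n)
      obtain ⟨c, hc⟩ := h1
      have hc2 : 2 ≤ c := by
        by_contra hcon
        interval_cases c <;> omega
      calc 2 ^ (n + 1) = 2 ^ n * 2 := by ring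
        _ ≤ a (n + 1) * c := Nat.mul_le_mul ih hc2
        _ = a (n + 2) := hc.symm
  -- summability
  have hsummable : Summable (fun n : ℕ => (1 : ℝ) / a (n + 1)) := by
    refine Summable.of_nonneg_of_le (fun n => by positivity) ?_
      (summable_geometric_of_lt_one (by norm_num) (by norm_num : (1/2 : ℝ) < 1))
    intro n
    have h2 : ((2 : ℝ) ^ n) ≤ (a (n + 1) : ℝ) := by exact_mod_cast hgeom n
    rw [div_pow, one_pow]
    exact one_div_le_one_div_of_le (by positivity) h2
  intro N hN
  set S := (Finset.Icc 1 N).filter (fun k => k ≠ sInf (A k)) with hS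
  -- each k in S has sInf (A k) < k ≤ N
  have hfib : ∀ k ∈ S, sInf (A k) ∈ Finset.range N := by
    intro k hk
    rw [hS, Finset.mem_filter, Finset.mem_Icc] at hk
    obtain ⟨⟨hk1, hkN⟩, hkne⟩ := hk
    have := (hcanon k).2.1
    rw [Finset.mem_range]
    omega
  have hcard := Finset.card_eq_sum_card_fiberwise hfib
  -- fiber bound
  have hfiber : ∀ i ∈ Finset.range N,
      ((S.filter (fun k => sInf (A k) = i)).card : ℝ) ≤ (N : ℝ) / a (i + 1) := by
    intro i _
    have hinj : ((S.filter (fun k => sInf (A k) = i)).card : ℕ) ≤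
        (Finset.Icc 1 (N / a (i + 1))).card := by
      apply Finset.card_le_card_of_injOn (fun k => (k - i) / a (i + 1))
      · intro k hk
        rw [Finset.mem_coe, Finset.mem_filter] at hk
        obtain ⟨hkS, hki⟩ := hk
        rw [hS, Finset.mem_filter, Finset.mem_Icc] at hkS
        obtain ⟨⟨hk1, hkN⟩, hkne⟩ := hkS
        obtain ⟨hmem, hle, hform⟩ := hcanon k
        rw [hki] at hform hkne
        rw [hform] at hmem
        obtain ⟨m, hm⟩ := hmem
        have hm1 : 1 ≤ m := by
          rcases Nat.eq_zero_or_pos m with rfl | h; · simp at hm; omega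
          · exact h
        have haI := hapos i
        simp only [Finset.mem_coe, Finset.mem_Icc]
        constructor
        · have : (k - i) / a (i + 1) = m := by
            rw [hm]; simp [Nat.add_sub_cancel_left, Nat.mul_div_cancel _ haI]
          omega
        · have hmle : m * a (i + 1) ≤ N := by omega
          have : (k - i) / a (i + 1) = m := by
            rw [hm]; simp [Nat.add_sub_cancel_left, Nat.mul_div_cancel _ haI]
          rw [this]
          exact Nat.le_div_iff_mul_le haI |>.2 hmle
      · intro k₁ hk₁ k₂ hk₂ heq
        rw [Finset.coe_filter] at hk₁ hk₂
        obtain ⟨hk₁S, hk₁i⟩ := hk₁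
        obtain ⟨hk₂S, hk₂i⟩ := hk₂
        obtain ⟨hmem₁, _, hform₁⟩ := hcanon k₁
        obtain ⟨hmem₂, _, hform₂⟩ := hcanon k₂
        rw [hk₁i] at hform₁; rw [hk₂i] at hform₂
        rw [hform₁] at hmem₁; rw [hform₂] at hmem₂
        obtain ⟨m₁, hm₁⟩ := hmem₁
        obtain ⟨m₂, hm₂⟩ := hmem₂
        have haI := hapos i
        have e₁ : (k₁ - i) / a (i + 1) = m₁ := by
          rw [hm₁]; simp [Nat.add_sub_cancel_left, Nat.mul_div_cancel _ haI]
        have e₂ : (k₂ - i) / a (i + 1) = m₂ := by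
          rw [hm₂]; simp [Nat.add_sub_cancel_left, Nat.mul_div_cancel _ haI]
        simp only at heq
        rw [e₁, e₂] at heq
        rw [hm₁, hm₂, heq]
    have h1 : ((S.filter (fun k => sInf (A k) = i)).card : ℝ) ≤
        ((Finset.Icc 1 (N / a (i + 1))).card : ℝ) := by exact_mod_cast hinj
    refine h1.trans ?_
    rw [Nat.card_Icc]
    simp only [Nat.add_sub_cancel]
    exact_mod_cast Nat.cast_div_le
  -- assemble
  have hsum : ((S.card : ℝ)) ≤ ∑ i ∈ Finset.range N, (N : ℝ) / a (i + 1) := by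
    rw [hcard]
    push_cast
    exact Finset.sum_le_sum hfiber
  have hsum2 : ∑ i ∈ Finset.range N, (N : ℝ) / a (i + 1)
      = (N : ℝ) * ∑ i ∈ Finset.range N, (1 : ℝ) / a (i + 1) := by
    rw [Finset.mul_sum]
    congr 1; ext i; ring
  have hstrict : ∑ i ∈ Finset.range N, (1 : ℝ) / a (i + 1) < ρ := by
    rw [hρ]
    have hle : ∑ i ∈ Finset.range (N + 1), (1 : ℝ) / a (i + 1) ≤
        ∑' n : ℕ, (1 : ℝ) / a (n + 1) :=
      Summable.sum_le_tsum _ (fun i _ => by positivity) hsummable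
    rw [Finset.sum_range_succ] at hle
    have hNpos : (0 : ℝ) < 1 / a (N + 1) := by
      have := hapos N; positivity
    linarith
  have hNpos : (0 : ℝ) < N := by exact_mod_cast hN
  calc ((S.card : ℝ)) ≤ (N : ℝ) * ∑ i ∈ Finset.range N, (1 : ℝ) / a (i + 1) := by
        rw [← hsum2]; exact hsum
    _ < N * ρ := by exact mul_lt_mul_of_pos_left hstrict hNpos
end
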